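/- arXiv:2507.01046 — 9 statements merged into one kernel-verified Lean document; each statement's English description precedes it below -/
import Mathlib

section
/- Let (S,I,R,S*,I*,R*) : [0,T] → ℝ⁶ be a differentiable solution of the deterministic SIR model with noncompliance whose initial values S(0), I(0), R(0), S*(0), I*(0), R*(0) are all nonnegative. Then S(t), I(t), R(t), S*(t), I*(t), R*(t) are nonnegative for all t ∈ [0,T]. -/
open Set Filter Topology in
lemma crossing_aux {y : ℝ → ℝ} {d σ : ℝ} (hσ : 0 < σ) (hd : 0 < d)
    (hy : HasDerivAt y d σ) (hy0 : y σ = 0)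
    (hpos : ∀ t ∈ Set.Ico (0:ℝ) σ, 0 < y t) : False := by
  have hs := hasDerivAt_iff_tendsto_slope.mp hy
  have h1 : Tendsto (slope y σ) (𝓝[<] σ) (𝓝 d) :=
    hs.mono_left (nhdsWithin_mono _ fun t ht => ne_of_lt ht)
  have h2 : ∀ᶠ t in 𝓝[<] σ, 0 < slope y σ t := h1.eventually (eventually_gt_nhds hd)
  have h3 : ∀ᶠ t in 𝓝[<] σ, t ∈ Set.Ioo (0:ℝ) σ :=
    eventually_of_mem (Ioo_mem_nhdsLT_of_mem ⟨hσ, le_refl σ⟩) (fun t ht => ht)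
  obtain ⟨t, ht1, ht2⟩ := (h2.and h3).exists
  have hslope : slope y σ t = y t / (t - σ) := by
    rw [slope_def_field, hy0]; ring_nf
  have hyt : y t < 0 := by
    by_contra hcon
    push_neg at hcon
    have : y t / (t - σ) ≤ 0 := div_nonpos_of_nonneg_of_nonpos hcon (by linarith [ht2.2])
    rw [hslope] at ht1; linarith
  exact absurd (hpos t ⟨ht2.1.le, ht2.2⟩) (not_lt.mpr hyt.le)

lemma case_aux {X : ℝ → ℝ} {σ c ε K dval : ℝ} (hσ0 : 0 < σ)
    (hc : c = ε * Real.exp (K * σ))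
    (hderiv : HasDerivAt X dval σ)
    (hX : X σ = -c)
    (hdpos : 0 < dval + K * c)
    (hbelow : ∀ s ∈ Set.Ico (0:ℝ) σ, 0 < X s + ε * Real.exp (K * s)) : False := by
  have hK : HasDerivAt (fun s : ℝ => K * s) K σ := by
    simpa using (hasDerivAt_id σ).const_mul K
  have hexp : HasDerivAt (fun s : ℝ => ε * Real.exp (K * s))
      (ε * (Real.exp (K * σ) * K)) σ := hK.exp.const_mul ε
  have htot : HasDerivAt (fun s => X s + ε * Real.exp (K * s))
      (dval + ε * (Real.exp (K * σ) * K)) σ := hderiv.add hexp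
  have heq : ε * (Real.exp (K * σ) * K) = K * c := by rw [hc]; ring
  refine crossing_aux hσ0 (by rw [heq]; exact hdpos) htot ?_ hbelow
  rw [hX, ← hc]; ring


lemma prod_lb {x y c₁ c₂ A : ℝ} (hc₁ : 0 ≤ c₁) (hc₂ : 0 ≤ c₂)
    (hx₁ : -c₁ ≤ x) (hx₂ : -A ≤ x) (hx₃ : x ≤ A)
    (hy₁ : -c₂ ≤ y) (hy₂ : -A ≤ y) (hy₃ : y ≤ A) :
    -((c₁ + c₂) * A) ≤ x * y := by
  have hA : 0 ≤ A := by linarith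
  rcases le_or_gt 0 x with hx | hx
  · rcases le_or_gt 0 y with hy | hy
    · nlinarith [mul_nonneg hx hy, mul_nonneg (add_nonneg hc₁ hc₂) hA]
    · nlinarith [mul_nonneg hx (by linarith : 0 ≤ y + c₂),
        mul_nonneg (by linarith : 0 ≤ A - x) hc₂, mul_nonneg hc₁ hA]
  · nlinarith [mul_nonneg (by linarith : 0 ≤ -x) (by linarith : 0 ≤ A - y),
      mul_nonneg (by linarith : 0 ≤ x + c₁) hA, mul_nonneg hc₂ hA]

section Bounds
variable {b β γ δ μ ν ξ α M c xS xI xR xSs xIs xRs : ℝ}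

lemma bound1 (hb : 0 < b) (hβ : 0 < β) (hγ : 0 < γ) (hδ : 0 < δ) (hμ : 0 < μ)
    (hν : 0 ≤ ν) (hξ0 : 0 ≤ ξ) (hξ1 : ξ ≤ 1) (hα0 : 0 < α) (hα1 : α ≤ 1)
    (hM : 0 < M) (hc : 0 < c) (hcM : c ≤ M)
    (hI1 : -c ≤ xI) (hI2 : -M ≤ xI) (hI3 : xI ≤ M)
    (hSs1 : -c ≤ xSs) (hSs2 : -M ≤ xSs) (hSs3 : xSs ≤ M)
    (hIs1 : -c ≤ xIs) (hIs2 : -M ≤ xIs) (hIs3 : xIs ≤ M)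
    (hRs1 : -c ≤ xRs) (hRs2 : -M ≤ xRs) (hRs3 : xRs ≤ M) :
    0 < (1 - ξ) * b - β * (1 - α) * -c * ((1 - α) * xI + xIs)
      - μ * -c * (xSs + xIs + xRs) + ν * xSs - δ * -c
      + (1 + γ + ν + δ + 7*(β*M) + 13*(μ*M)) * c := by
  have ha1 : 0 ≤ 1 - α := by linarith
  have hbξ : 0 ≤ (1 - ξ) * b := mul_nonneg (by linarith) hb.le
  have hIMl : -(2*M) ≤ (1-α)*xI + xIs := by
    nlinarith [mul_nonneg ha1 (by linarith : 0 ≤ xI + M), mul_nonneg hα0.le hM.le]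
  have t1 : -(2*(β*(M*c))) ≤ β*(1-α)*c*((1-α)*xI + xIs) := by
    have hw0 : (0:ℝ) ≤ β*(1-α)*c := by positivity
    have hwle : β*(1-α)*c ≤ β*c := by nlinarith [mul_nonneg (mul_nonneg hβ.le hc.le) hα0.le]
    have s1 := mul_le_mul_of_nonneg_left hIMl hw0
    have s2 := mul_le_mul_of_nonneg_right hwle (by positivity : (0:ℝ) ≤ 2*M)
    nlinarith [s1, s2]
  have t2 : -(3*(μ*(M*c))) ≤ μ*c*(xSs + xIs + xRs) := by
    have s1 := mul_le_mul_of_nonneg_left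
      (by linarith : -(3*M) ≤ xSs + xIs + xRs) (by positivity : (0:ℝ) ≤ μ*c)
    linarith [s1]
  have t3 : -(ν*c) ≤ ν * xSs := by
    have s1 := mul_le_mul_of_nonneg_left hSs1 hν
    linarith [s1]
  have hγc : 0 ≤ γ*c := by positivity
  have hδc : 0 ≤ δ*c := by positivity
  have hβMc : 0 ≤ β*(M*c) := by positivity
  have hμMc : 0 ≤ μ*(M*c) := by positivity
  have hνc : 0 ≤ ν*c := mul_nonneg hν hc.le
  linarith

lemma bound2 (hb : 0 < b) (hβ : 0 < β) (hγ : 0 < γ) (hδ : 0 < δ) (hμ : 0 < μ)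
    (hν : 0 ≤ ν) (hξ0 : 0 ≤ ξ) (hξ1 : ξ ≤ 1) (hα0 : 0 < α) (hα1 : α ≤ 1)
    (hM : 0 < M) (hc : 0 < c) (hcM : c ≤ M)
    (hS1 : -c ≤ xS) (hS2 : -M ≤ xS) (hS3 : xS ≤ M)
    (hSs1 : -c ≤ xSs) (hSs2 : -M ≤ xSs) (hSs3 : xSs ≤ M)
    (hIs1 : -c ≤ xIs) (hIs2 : -M ≤ xIs) (hIs3 : xIs ≤ M)
    (hRs1 : -c ≤ xRs) (hRs2 : -M ≤ xRs) (hRs3 : xRs ≤ M) :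
    0 < β * (1 - α) * xS * ((1 - α) * -c + xIs) - γ * -c
      - μ * -c * (xSs + xIs + xRs) + ν * xIs - δ * -c
      + (1 + γ + ν + δ + 7*(β*M) + 13*(μ*M)) * c := by
  have ha1 : 0 ≤ 1 - α := by linarith
  have hy1 : -(2*c) ≤ (1-α) * -c + xIs := by
    nlinarith [mul_nonneg hα0.le hc.le]
  have hy2 : -(2*M) ≤ (1-α) * -c + xIs := by
    nlinarith [mul_nonneg hα0.le hc.le]
  have hy3 : (1-α) * -c + xIs ≤ 2*M := by
    nlinarith [mul_nonneg ha1 hc.le]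
  have P1 : -((c + 2*c) * (2*M)) ≤ xS * ((1-α) * -c + xIs) :=
    prod_lb hc.le (by linarith) hS1 (by linarith) (by linarith) hy1 hy2 hy3
  have Q1 : -(6*(β*(M*c))) ≤ β*(1-α)*(xS * ((1-α) * -c + xIs)) := by
    have hu : -(6*(M*c)) ≤ xS * ((1-α) * -c + xIs) := by linarith [P1]
    have hw0 : (0:ℝ) ≤ β*(1-α) := mul_nonneg hβ.le ha1
    have hwle : β*(1-α) ≤ β := by nlinarith [mul_nonneg hβ.le hα0.le]
    have s1 := mul_le_mul_of_nonneg_left hu hw0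
    have s2 := mul_le_mul_of_nonneg_right hwle (by positivity : (0:ℝ) ≤ 6*(M*c))
    nlinarith [s1, s2]
  have t2 : -(3*(μ*(M*c))) ≤ μ*c*(xSs + xIs + xRs) := by
    have s1 := mul_le_mul_of_nonneg_left
      (by linarith : -(3*M) ≤ xSs + xIs + xRs) (by positivity : (0:ℝ) ≤ μ*c)
    linarith [s1]
  have t3 : -(ν*c) ≤ ν * xIs := by
    have s1 := mul_le_mul_of_nonneg_left hIs1 hν
    linarith [s1]
  have hγc : 0 ≤ γ*c := by positivity
  have hδc : 0 ≤ δ*c := by positivity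
  have hβMc : 0 ≤ β*(M*c) := by positivity
  have hμMc : 0 ≤ μ*(M*c) := by positivity
  have hνc : 0 ≤ ν*c := mul_nonneg hν hc.le
  linarith

lemma bound3 (hb : 0 < b) (hβ : 0 < β) (hγ : 0 < γ) (hδ : 0 < δ) (hμ : 0 < μ)
    (hν : 0 ≤ ν) (hM : 0 < M) (hc : 0 < c) (hcM : c ≤ M)
    (hI1 : -c ≤ xI) (hI2 : -M ≤ xI) (hI3 : xI ≤ M)
    (hSs1 : -c ≤ xSs) (hSs2 : -M ≤ xSs) (hSs3 : xSs ≤ M)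
    (hIs1 : -c ≤ xIs) (hIs2 : -M ≤ xIs) (hIs3 : xIs ≤ M)
    (hRs1 : -c ≤ xRs) (hRs2 : -M ≤ xRs) (hRs3 : xRs ≤ M) :
    0 < γ * xI - μ * -c * (xSs + xIs + xRs) + ν * xRs - δ * -c
      + (1 + γ + ν + δ + 7*(β*M) + 13*(μ*M)) * c := by
  have t1 : -(γ*c) ≤ γ * xI := by
    have s1 := mul_le_mul_of_nonneg_left hI1 hγ.le
    linarith [s1]
  have t2 : -(3*(μ*(M*c))) ≤ μ*c*(xSs + xIs + xRs) := by
    have s1 := mul_le_mul_of_nonneg_left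
      (by linarith : -(3*M) ≤ xSs + xIs + xRs) (by positivity : (0:ℝ) ≤ μ*c)
    linarith [s1]
  have t3 : -(ν*c) ≤ ν * xRs := by
    have s1 := mul_le_mul_of_nonneg_left hRs1 hν
    linarith [s1]
  have hγc : 0 ≤ γ*c := by positivity
  have hδc : 0 ≤ δ*c := by positivity
  have hβMc : 0 ≤ β*(M*c) := by positivity
  have hμMc : 0 ≤ μ*(M*c) := by positivity
  have hνc : 0 ≤ ν*c := mul_nonneg hν hc.le
  linarith

lemma bound4 (hb : 0 < b) (hβ : 0 < β) (hγ : 0 < γ) (hδ : 0 < δ) (hμ : 0 < μ)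
    (hν : 0 ≤ ν) (hξ0 : 0 ≤ ξ) (hξ1 : ξ ≤ 1) (hα0 : 0 < α) (hα1 : α ≤ 1)
    (hM : 0 < M) (hc : 0 < c) (hcM : c ≤ M)
    (hS1 : -c ≤ xS) (hS2 : -M ≤ xS) (hS3 : xS ≤ M)
    (hI1 : -c ≤ xI) (hI2 : -M ≤ xI) (hI3 : xI ≤ M)
    (hIs1 : -c ≤ xIs) (hIs2 : -M ≤ xIs) (hIs3 : xIs ≤ M)
    (hRs1 : -c ≤ xRs) (hRs2 : -M ≤ xRs) (hRs3 : xRs ≤ M) :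
    0 < ξ * b - β * -c * ((1 - α) * xI + xIs) + μ * xS * (-c + xIs + xRs)
      - ν * -c - δ * -c + (1 + γ + ν + δ + 7*(β*M) + 13*(μ*M)) * c := by
  have ha1 : 0 ≤ 1 - α := by linarith
  have hξb : 0 ≤ ξ*b := mul_nonneg hξ0 hb.le
  have hIMl : -(2*M) ≤ (1-α)*xI + xIs := by
    nlinarith [mul_nonneg ha1 (by linarith : 0 ≤ xI + M), mul_nonneg hα0.le hM.le]
  have t1 : -(2*(β*(M*c))) ≤ β*c*((1-α)*xI + xIs) := by
    have s1 := mul_le_mul_of_nonneg_left hIMl (by positivity : (0:ℝ) ≤ β*c)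
    linarith [s1]
  have P3 : -((c + 3*c) * (3*M)) ≤ xS * (-c + xIs + xRs) :=
    prod_lb hc.le (by linarith) hS1 (by linarith) (by linarith)
      (by linarith) (by linarith) (by linarith)
  have t2 : -(12*(μ*(M*c))) ≤ μ*(xS * (-c + xIs + xRs)) := by
    have hu : -(12*(M*c)) ≤ xS * (-c + xIs + xRs) := by linarith [P3]
    have s1 := mul_le_mul_of_nonneg_left hu hμ.le
    linarith [s1]
  have hγc : 0 ≤ γ*c := by positivity
  have hδc : 0 ≤ δ*c := by positivity
  have hβMc : 0 ≤ β*(M*c) := by positivity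
  have hμMc : 0 ≤ μ*(M*c) := by positivity
  have hνc : 0 ≤ ν*c := mul_nonneg hν hc.le
  linarith

lemma bound5 (hb : 0 < b) (hβ : 0 < β) (hγ : 0 < γ) (hδ : 0 < δ) (hμ : 0 < μ)
    (hν : 0 ≤ ν) (hα0 : 0 < α) (hα1 : α ≤ 1)
    (hM : 0 < M) (hc : 0 < c) (hcM : c ≤ M)
    (hI1 : -c ≤ xI) (hI2 : -M ≤ xI) (hI3 : xI ≤ M)
    (hSs1 : -c ≤ xSs) (hSs2 : -M ≤ xSs) (hSs3 : xSs ≤ M)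
    (hRs1 : -c ≤ xRs) (hRs2 : -M ≤ xRs) (hRs3 : xRs ≤ M) :
    0 < β * xSs * ((1 - α) * xI + -c) - γ * -c + μ * xI * (xSs + -c + xRs)
      - ν * -c - δ * -c + (1 + γ + ν + δ + 7*(β*M) + 13*(μ*M)) * c := by
  have ha1 : 0 ≤ 1 - α := by linarith
  have hy1 : -(2*c) ≤ (1-α)*xI + -c := by
    nlinarith [mul_nonneg ha1 (by linarith : 0 ≤ xI + c), mul_nonneg hα0.le hc.le]
  have hy2 : -(2*M) ≤ (1-α)*xI + -c := by
    nlinarith [mul_nonneg ha1 (by linarith : 0 ≤ xI + M), mul_nonneg hα0.le hM.le]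
  have hy3 : (1-α)*xI + -c ≤ 2*M := by
    nlinarith [mul_nonneg ha1 (by linarith : 0 ≤ M - xI), mul_nonneg hα0.le hM.le]
  have P1 : -((c + 2*c) * (2*M)) ≤ xSs * ((1-α)*xI + -c) :=
    prod_lb hc.le (by linarith) hSs1 (by linarith) (by linarith) hy1 hy2 hy3
  have Q1 : -(6*(β*(M*c))) ≤ β*(xSs * ((1-α)*xI + -c)) := by
    have hu : -(6*(M*c)) ≤ xSs * ((1-α)*xI + -c) := by linarith [P1]
    have s1 := mul_le_mul_of_nonneg_left hu hβ.le
    linarith [s1]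
  have P4 : -((c + 3*c) * (3*M)) ≤ xI * (xSs + -c + xRs) :=
    prod_lb hc.le (by linarith) hI1 (by linarith) (by linarith)
      (by linarith) (by linarith) (by linarith)
  have t2 : -(12*(μ*(M*c))) ≤ μ*(xI * (xSs + -c + xRs)) := by
    have hu : -(12*(M*c)) ≤ xI * (xSs + -c + xRs) := by linarith [P4]
    have s1 := mul_le_mul_of_nonneg_left hu hμ.le
    linarith [s1]
  have hγc : 0 ≤ γ*c := by positivity
  have hδc : 0 ≤ δ*c := by positivity
  have hβMc : 0 ≤ β*(M*c) := by positivity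
  have hμMc : 0 ≤ μ*(M*c) := by positivity
  have hνc : 0 ≤ ν*c := mul_nonneg hν hc.le
  linarith

lemma bound6 (hb : 0 < b) (hβ : 0 < β) (hγ : 0 < γ) (hδ : 0 < δ) (hμ : 0 < μ)
    (hν : 0 ≤ ν) (hM : 0 < M) (hc : 0 < c) (hcM : c ≤ M)
    (hR1 : -c ≤ xR) (hR2 : -M ≤ xR) (hR3 : xR ≤ M)
    (hSs1 : -c ≤ xSs) (hSs2 : -M ≤ xSs) (hSs3 : xSs ≤ M)
    (hIs1 : -c ≤ xIs) (hIs2 : -M ≤ xIs) (hIs3 : xIs ≤ M) :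
    0 < γ * xIs + μ * xR * (xSs + xIs + -c) - ν * -c - δ * -c
      + (1 + γ + ν + δ + 7*(β*M) + 13*(μ*M)) * c := by
  have t1 : -(γ*c) ≤ γ * xIs := by
    have s1 := mul_le_mul_of_nonneg_left hIs1 hγ.le
    linarith [s1]
  have P5 : -((c + 3*c) * (3*M)) ≤ xR * (xSs + xIs + -c) :=
    prod_lb hc.le (by linarith) hR1 (by linarith) (by linarith)
      (by linarith) (by linarith) (by linarith)
  have t2 : -(12*(μ*(M*c))) ≤ μ*(xR * (xSs + xIs + -c)) := by
    have hu : -(12*(M*c)) ≤ xR * (xSs + xIs + -c) := by linarith [P5]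
    have s1 := mul_le_mul_of_nonneg_left hu hμ.le
    linarith [s1]
  have hγc : 0 ≤ γ*c := by positivity
  have hδc : 0 ≤ δ*c := by positivity
  have hβMc : 0 ≤ β*(M*c) := by positivity
  have hμMc : 0 ≤ μ*(M*c) := by positivity
  have hνc : 0 ≤ ν*c := mul_nonneg hν hc.le
  linarith
end Bounds

/-- The deterministic SIR model with noncompliance: `IsSIRSol` says that the six
population functions satisfy the ODE system at time `t`.
Variables: `S`, `I`, `R` compliant susceptible/infectious/recovered;
`Ss = S*`, `Is = I*`, `Rs = R*` their noncompliant counterparts. -/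
def IsSIRSol (b δ β γ α μ ν ξ : ℝ) (S I R Ss Is Rs : ℝ → ℝ) (t : ℝ) : Prop :=
  HasDerivAt S ((1 - ξ) * b - β * (1 - α) * S t * ((1 - α) * I t + Is t)
      - μ * S t * (Ss t + Is t + Rs t) + ν * Ss t - δ * S t) t ∧
  HasDerivAt I (β * (1 - α) * S t * ((1 - α) * I t + Is t) - γ * I t
      - μ * I t * (Ss t + Is t + Rs t) + ν * Is t - δ * I t) t ∧
  HasDerivAt R (γ * I t - μ * R t * (Ss t + Is t + Rs t) + ν * Rs t - δ * R t) t ∧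
  HasDerivAt Ss (ξ * b - β * Ss t * ((1 - α) * I t + Is t)
      + μ * S t * (Ss t + Is t + Rs t) - ν * Ss t - δ * Ss t) t ∧
  HasDerivAt Is (β * Ss t * ((1 - α) * I t + Is t) - γ * Is t
      + μ * I t * (Ss t + Is t + Rs t) - ν * Is t - δ * Is t) t ∧
  HasDerivAt Rs (γ * Is t + μ * R t * (Ss t + Is t + Rs t) - ν * Rs t - δ * Rs t) t

open Set Filter Topology in
set_option maxHeartbeats 1000000 in
/-- solutions of the deterministic SIR model with noncompliance on
`[0, T]` with nonnegative initial data remain nonnegative on `[0, T]`. -/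
theorem solutions_nonnegative
    (b δ β γ α μ ν ξ T : ℝ)
    (hb : 0 < b) (hδ : 0 < δ) (hβ : 0 < β) (hγ : 0 < γ)
    (hα : α ∈ Set.Ioc (0 : ℝ) 1) (hμ : 0 < μ) (hν : 0 ≤ ν)
    (hξ : ξ ∈ Set.Icc (0 : ℝ) 1)
    (S I R Ss Is Rs : ℝ → ℝ)
    (hsol : ∀ t ∈ Set.Icc (0 : ℝ) T, IsSIRSol b δ β γ α μ ν ξ S I R Ss Is Rs t)
    (hS0 : 0 ≤ S 0) (hI0 : 0 ≤ I 0) (hR0 : 0 ≤ R 0)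
    (hSs0 : 0 ≤ Ss 0) (hIs0 : 0 ≤ Is 0) (hRs0 : 0 ≤ Rs 0) :
    ∀ t ∈ Set.Icc (0 : ℝ) T,
      0 ≤ S t ∧ 0 ≤ I t ∧ 0 ≤ R t ∧ 0 ≤ Ss t ∧ 0 ≤ Is t ∧ 0 ≤ Rs t := by
  intro t ht
  have hcS : ContinuousOn S (Icc 0 T) :=
    fun s hs => ((hsol s hs).1.continuousAt).continuousWithinAt
  have hcI : ContinuousOn I (Icc 0 T) :=
    fun s hs => ((hsol s hs).2.1.continuousAt).continuousWithinAt
  have hcR : ContinuousOn R (Icc 0 T) :=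
    fun s hs => ((hsol s hs).2.2.1.continuousAt).continuousWithinAt
  have hcSs : ContinuousOn Ss (Icc 0 T) :=
    fun s hs => ((hsol s hs).2.2.2.1.continuousAt).continuousWithinAt
  have hcIs : ContinuousOn Is (Icc 0 T) :=
    fun s hs => ((hsol s hs).2.2.2.2.1.continuousAt).continuousWithinAt
  have hcRs : ContinuousOn Rs (Icc 0 T) :=
    fun s hs => ((hsol s hs).2.2.2.2.2.continuousAt).continuousWithinAt
  obtain ⟨C1, hC1⟩ := isCompact_Icc.exists_bound_of_continuousOn hcS
  obtain ⟨C2, hC2⟩ := isCompact_Icc.exists_bound_of_continuousOn hcI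
  obtain ⟨C3, hC3⟩ := isCompact_Icc.exists_bound_of_continuousOn hcR
  obtain ⟨C4, hC4⟩ := isCompact_Icc.exists_bound_of_continuousOn hcSs
  obtain ⟨C5, hC5⟩ := isCompact_Icc.exists_bound_of_continuousOn hcIs
  obtain ⟨C6, hC6⟩ := isCompact_Icc.exists_bound_of_continuousOn hcRs
  set M : ℝ := 1 + |C1| + |C2| + |C3| + |C4| + |C5| + |C6| with hMdef
  have hM0 : 0 < M := by positivity
  have hbound : ∀ s ∈ Icc (0:ℝ) T,
      |S s| ≤ M ∧ |I s| ≤ M ∧ |R s| ≤ M ∧ |Ss s| ≤ M ∧ |Is s| ≤ M ∧ |Rs s| ≤ M := by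
    intro s hs
    have h1 : |S s| ≤ C1 := by simpa using hC1 s hs
    have h2 : |I s| ≤ C2 := by simpa using hC2 s hs
    have h3 : |R s| ≤ C3 := by simpa using hC3 s hs
    have h4 : |Ss s| ≤ C4 := by simpa using hC4 s hs
    have h5 : |Is s| ≤ C5 := by simpa using hC5 s hs
    have h6 : |Rs s| ≤ C6 := by simpa using hC6 s hs
    have l1 := le_abs_self C1; have l2 := le_abs_self C2; have l3 := le_abs_self C3
    have l4 := le_abs_self C4; have l5 := le_abs_self C5; have l6 := le_abs_self C6
    have a1 := abs_nonneg C1; have a2 := abs_nonneg C2; have a3 := abs_nonneg C3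
    have a4 := abs_nonneg C4; have a5 := abs_nonneg C5; have a6 := abs_nonneg C6
    refine ⟨by rw [hMdef]; linarith only [h1, l1, a2, a3, a4, a5, a6],
      by rw [hMdef]; linarith only [h2, l2, a1, a3, a4, a5, a6],
      by rw [hMdef]; linarith only [h3, l3, a1, a2, a4, a5, a6],
      by rw [hMdef]; linarith only [h4, l4, a1, a2, a3, a5, a6],
      by rw [hMdef]; linarith only [h5, l5, a1, a2, a3, a4, a6],
      by rw [hMdef]; linarith only [h6, l6, a1, a2, a3, a4, a5]⟩
  set K : ℝ := 1 + γ + ν + δ + 7*(β*M) + 13*(μ*M) with hKdef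
  set m : ℝ → ℝ := fun s =>
    min (S s) (min (I s) (min (R s) (min (Ss s) (min (Is s) (Rs s))))) with hmdef
  have hmS : ∀ s, m s ≤ S s := fun s => min_le_left _ _
  have hmI : ∀ s, m s ≤ I s := fun s =>
    le_trans (min_le_right _ _) (min_le_left _ _)
  have hmR : ∀ s, m s ≤ R s := fun s =>
    le_trans (min_le_right _ _) (le_trans (min_le_right _ _) (min_le_left _ _))
  have hmSs : ∀ s, m s ≤ Ss s := fun s =>
    le_trans (min_le_right _ _) (le_trans (min_le_right _ _)
      (le_trans (min_le_right _ _) (min_le_left _ _)))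
  have hmIs : ∀ s, m s ≤ Is s := fun s =>
    le_trans (min_le_right _ _) (le_trans (min_le_right _ _)
      (le_trans (min_le_right _ _) (le_trans (min_le_right _ _) (min_le_left _ _))))
  have hmRs : ∀ s, m s ≤ Rs s := fun s =>
    le_trans (min_le_right _ _) (le_trans (min_le_right _ _)
      (le_trans (min_le_right _ _) (le_trans (min_le_right _ _) (min_le_right _ _))))
  have hmcont : ContinuousOn m (Icc 0 T) := fun s hs =>
    ((hcS s hs).min ((hcI s hs).min ((hcR s hs).min
      ((hcSs s hs).min ((hcIs s hs).min (hcRs s hs))))))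
  have hm0 : 0 ≤ m 0 :=
    le_min hS0 (le_min hI0 (le_min hR0 (le_min hSs0 (le_min hIs0 hRs0))))
  have key : ∀ ε : ℝ, 0 < ε → ∀ s ∈ Icc (0:ℝ) T, -(ε * Real.exp (K * s)) < m s := by
    intro ε hε
    by_contra hcon
    push_neg at hcon
    obtain ⟨s₀, hs₀, hbad₀⟩ := hcon
    set bad : Set ℝ := {s | s ∈ Icc (0:ℝ) T ∧ m s + ε * Real.exp (K * s) ≤ 0} with hbaddef
    have hbadeq : bad = Icc (0:ℝ) T ∩ (fun s => m s + ε * Real.exp (K * s)) ⁻¹' (Iic 0) := by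
      ext s; simp [hbaddef]
    have hhcont : ContinuousOn (fun s => m s + ε * Real.exp (K * s)) (Icc 0 T) :=
      hmcont.add ((by fun_prop : Continuous fun s : ℝ => ε * Real.exp (K * s)).continuousOn)
    have hclosed : IsClosed bad := by
      rw [hbadeq]
      exact hhcont.preimage_isClosed_of_isClosed isClosed_Icc isClosed_Iic
    have hne : bad.Nonempty := ⟨s₀, hs₀, by linarith only [hbad₀]⟩
    have hbdd : BddBelow bad := ⟨0, fun x hx => hx.1.1⟩
    set σ := sInf bad with hσdef
    have hσmem : σ ∈ bad := hclosed.csInf_mem hne hbdd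
    have hσIcc : σ ∈ Icc (0:ℝ) T := hσmem.1
    have hσbad : m σ + ε * Real.exp (K * σ) ≤ 0 := hσmem.2
    have h0good : 0 < m 0 + ε * Real.exp (K * 0) := by
      have hep := mul_pos hε (Real.exp_pos (K * 0))
      linarith only [hm0, hep]
    have hσ0 : 0 < σ := by
      rcases lt_or_eq_of_le hσIcc.1 with h | h
      · exact h
      · exfalso; rw [← h] at hσbad; linarith only [hσbad, h0good]
    have hIco : ∀ s ∈ Ico (0:ℝ) σ, 0 < m s + ε * Real.exp (K * s) := by
      intro s hs
      by_contra hcon2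
      push_neg at hcon2
      have hmem : s ∈ bad := ⟨⟨hs.1, le_trans hs.2.le hσIcc.2⟩, hcon2⟩
      exact absurd (csInf_le hbdd hmem) (not_le.mpr hs.2)
    have hσge : 0 ≤ m σ + ε * Real.exp (K * σ) := by
      have hsub : Ico (0:ℝ) σ ⊆ Icc 0 T := fun s hs => ⟨hs.1, le_trans hs.2.le hσIcc.2⟩
      have hcw : ContinuousWithinAt (fun s => m s + ε * Real.exp (K * s)) (Ico 0 σ) σ :=
        (hhcont σ hσIcc).mono hsub
      have hnb : (𝓝[Ico (0:ℝ) σ] σ).NeBot := by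
        apply mem_closure_iff_nhdsWithin_neBot.mp
        rw [closure_Ico (ne_of_lt hσ0)]
        exact ⟨hσIcc.1, le_refl σ⟩
      exact ge_of_tendsto hcw (eventually_mem_nhdsWithin.mono (fun s hs => (hIco s hs).le))
    set c := ε * Real.exp (K * σ) with hcdef
    have hc0 : 0 < c := mul_pos hε (Real.exp_pos _)
    have hσeq : m σ = -c := by linarith only [hσbad, hσge]
    obtain ⟨hb1, hb2, hb3, hb4, hb5, hb6⟩ := hbound σ hσIcc
    have hSl : -M ≤ S σ := (abs_le.mp hb1).1
    have hSu : S σ ≤ M := (abs_le.mp hb1).2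
    have hIl : -M ≤ I σ := (abs_le.mp hb2).1
    have hIu : I σ ≤ M := (abs_le.mp hb2).2
    have hRl : -M ≤ R σ := (abs_le.mp hb3).1
    have hRu : R σ ≤ M := (abs_le.mp hb3).2
    have hSsl : -M ≤ Ss σ := (abs_le.mp hb4).1
    have hSsu : Ss σ ≤ M := (abs_le.mp hb4).2
    have hIsl : -M ≤ Is σ := (abs_le.mp hb5).1
    have hIsu : Is σ ≤ M := (abs_le.mp hb5).2
    have hRsl : -M ≤ Rs σ := (abs_le.mp hb6).1
    have hRsu : Rs σ ≤ M := (abs_le.mp hb6).2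
    have hmlM : -M ≤ m σ :=
      le_min hSl (le_min hIl (le_min hRl (le_min hSsl (le_min hIsl hRsl))))
    have hcM : c ≤ M := by
      rw [hσeq] at hmlM; linarith only [hmlM]
    have hSc : -c ≤ S σ := hσeq ▸ hmS σ
    have hIc : -c ≤ I σ := hσeq ▸ hmI σ
    have hRc : -c ≤ R σ := hσeq ▸ hmR σ
    have hSsc : -c ≤ Ss σ := hσeq ▸ hmSs σ
    have hIsc : -c ≤ Is σ := hσeq ▸ hmIs σ
    have hRsc : -c ≤ Rs σ := hσeq ▸ hmRs σ
    obtain ⟨hd1, hd2, hd3, hd4, hd5, hd6⟩ := hsol σ hσIcc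
    have hm' : min (S σ) (min (I σ) (min (R σ) (min (Ss σ) (min (Is σ) (Rs σ))))) = -c := hσeq
    have hcases : S σ = -c ∨ I σ = -c ∨ R σ = -c ∨ Ss σ = -c ∨ Is σ = -c ∨ Rs σ = -c := by
      rcases min_cases (S σ) (min (I σ) (min (R σ) (min (Ss σ) (min (Is σ) (Rs σ))))) with
        ⟨h1, -⟩ | ⟨h1, -⟩
      · left; rw [← h1]; exact hm'
      · rw [h1] at hm'
        rcases min_cases (I σ) (min (R σ) (min (Ss σ) (min (Is σ) (Rs σ)))) with
          ⟨h2, -⟩ | ⟨h2, -⟩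
        · right; left; rw [← h2]; exact hm'
        · rw [h2] at hm'
          rcases min_cases (R σ) (min (Ss σ) (min (Is σ) (Rs σ))) with ⟨h3, -⟩ | ⟨h3, -⟩
          · right; right; left; rw [← h3]; exact hm'
          · rw [h3] at hm'
            rcases min_cases (Ss σ) (min (Is σ) (Rs σ)) with ⟨h4, -⟩ | ⟨h4, -⟩
            · right; right; right; left; rw [← h4]; exact hm'
            · rw [h4] at hm'
              rcases min_cases (Is σ) (Rs σ) with ⟨h5, -⟩ | ⟨h5, -⟩
              · right; right; right; right; left; rw [← h5]; exact hm'
              · right; right; right; right; right; rw [← h5]; exact hm'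
    have below : ∀ (X : ℝ → ℝ), (∀ s, m s ≤ X s) →
        ∀ s ∈ Ico (0:ℝ) σ, 0 < X s + ε * Real.exp (K * s) :=
      fun X hX s hs => lt_of_lt_of_le (hIco s hs) (by linarith only [hX s])
    rcases hcases with hEq | hEq | hEq | hEq | hEq | hEq
    · refine case_aux hσ0 hcdef hd1 hEq ?_ (below S hmS)
      rw [hEq, hKdef]
      linarith only [bound1 hb hβ hγ hδ hμ hν hξ.1 hξ.2 hα.1 hα.2 hM0 hc0 hcM
        hIc hIl hIu hSsc hSsl hSsu hIsc hIsl hIsu hRsc hRsl hRsu]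
    · refine case_aux hσ0 hcdef hd2 hEq ?_ (below I hmI)
      rw [hEq, hKdef]
      linarith only [bound2 hb hβ hγ hδ hμ hν hξ.1 hξ.2 hα.1 hα.2 hM0 hc0 hcM
        hSc hSl hSu hSsc hSsl hSsu hIsc hIsl hIsu hRsc hRsl hRsu]
    · refine case_aux hσ0 hcdef hd3 hEq ?_ (below R hmR)
      rw [hEq, hKdef]
      linarith only [bound3 hb hβ hγ hδ hμ hν hM0 hc0 hcM
        hIc hIl hIu hSsc hSsl hSsu hIsc hIsl hIsu hRsc hRsl hRsu]
    · refine case_aux hσ0 hcdef hd4 hEq ?_ (below Ss hmSs)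
      rw [hEq, hKdef]
      linarith only [bound4 hb hβ hγ hδ hμ hν hξ.1 hξ.2 hα.1 hα.2 hM0 hc0 hcM
        hSc hSl hSu hIc hIl hIu hIsc hIsl hIsu hRsc hRsl hRsu]
    · refine case_aux hσ0 hcdef hd5 hEq ?_ (below Is hmIs)
      rw [hEq, hKdef]
      linarith only [bound5 hb hβ hγ hδ hμ hν hα.1 hα.2 hM0 hc0 hcM
        hIc hIl hIu hSsc hSsl hSsu hRsc hRsl hRsu]
    · refine case_aux hσ0 hcdef hd6 hEq ?_ (below Rs hmRs)
      rw [hEq, hKdef]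
      linarith only [bound6 hb hβ hγ hδ hμ hν hM0 hc0 hcM
        hRc hRl hRu hSsc hSsl hSsu hIsc hIsl hIsu]
  have hmt : 0 ≤ m t := by
    by_contra hneg
    push_neg at hneg
    have hexp := Real.exp_pos (K * t)
    have hε : 0 < (-(m t)) / (2 * Real.exp (K * t)) :=
      div_pos (neg_pos.mpr hneg) (by positivity)
    have hk := key _ hε t ht
    have heq : (-(m t)) / (2 * Real.exp (K * t)) * Real.exp (K * t) = -(m t)/2 := by
      field_simp
    rw [heq] at hk
    linarith only [hk, hneg]
  exact ⟨le_trans hmt (hmS t), le_trans hmt (hmI t), le_trans hmt (hmR t),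
    le_trans hmt (hmSs t), le_trans hmt (hmIs t), le_trans hmt (hmRs t)⟩
end

section
/- Let s, s* ≥ 0 and let F_{s,s*} = [[β(1−α)²s, β(1−α)s],[β(1−α)s*, βs*]] and V_{s,s*} = [[γ+δ+μs*, −ν],[−μs*, γ+δ+ν]]. Then the eigenvalues of the matrix F_{s,s*}·V_{s,s*}^{−1} are 0 and ℛ₀(s,s*) = (β/(γ+δ))·( s[(1−α)² + α(1−α)μs*/(γ+δ+ν+μs*)] + s*[1 − αν/(γ+δ+ν+μs*)] ); in particular the spectral radius of F_{s,s*}·V_{s,s*}^{−1} equals ℛ₀(s,s*). -/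
/-- The reproductive ratio `ℛ₀(s, s*)` of the SIR model with noncompliance at the
disease free state with compliant susceptible population `s` and noncompliant
susceptible population `s*`. -/
noncomputable def R0 (β γ δ α μ ν s sstar : ℝ) : ℝ :=
  β / (γ + δ) *
    (s * ((1 - α) ^ 2 + α * (1 - α) * μ * sstar / (γ + δ + ν + μ * sstar)) +
     sstar * (1 - α * ν / (γ + δ + ν + μ * sstar)))


lemma spec2_aux (M : Matrix (Fin 2) (Fin 2) ℝ) (x : ℝ) :
    x ∈ spectrum ℝ M ↔ (x - M 0 0) * (x - M 1 1) - M 0 1 * M 1 0 = 0 := by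
  rw [spectrum.mem_iff, Matrix.isUnit_iff_isUnit_det, isUnit_iff_ne_zero, not_ne_iff,
    Matrix.det_fin_two]
  simp [Matrix.algebraMap_matrix_apply, Matrix.sub_apply]

/-- the next-generation matrix `F_{s,s*} V_{s,s*}⁻¹` has eigenvalues
`0` and `ℛ₀(s,s*)`, and its spectral radius equals `ℛ₀(s,s*)`. -/
theorem next_generation_matrix_spectrum
    (β γ δ α μ ν s sstar : ℝ)
    (hβ : 0 < β) (hγ : 0 < γ) (hδ : 0 < δ) (hα : α ∈ Set.Ioc (0 : ℝ) 1)
    (hμ : 0 < μ) (hν : 0 ≤ ν) (hs : 0 ≤ s) (hsstar : 0 ≤ sstar) :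
    spectrum ℝ
        (!![β * (1 - α) ^ 2 * s, β * (1 - α) * s; β * (1 - α) * sstar, β * sstar] *
          (!![γ + δ + μ * sstar, -ν; -μ * sstar, γ + δ + ν])⁻¹)
      = {0, R0 β γ δ α μ ν s sstar} ∧
    IsGreatest
      ((fun x => |x|) '' spectrum ℝ
        (!![β * (1 - α) ^ 2 * s, β * (1 - α) * s; β * (1 - α) * sstar, β * sstar] *
          (!![γ + δ + μ * sstar, -ν; -μ * sstar, γ + δ + ν])⁻¹))
      (R0 β γ δ α μ ν s sstar) := by
  obtain ⟨hα0, hα1⟩ := hα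
  have hE : (0:ℝ) < γ + δ + ν + μ * sstar := by positivity
  have hgd : (0:ℝ) < γ + δ := by positivity
  set V : Matrix (Fin 2) (Fin 2) ℝ := !![γ + δ + μ * sstar, -ν; -μ * sstar, γ + δ + ν] with hV
  have hdet : V.det = (γ + δ) * (γ + δ + ν + μ * sstar) := by
    simp [hV, Matrix.det_fin_two_of]; ring
  have hdet0 : V.det ≠ 0 := by rw [hdet]; positivity
  have hinv : V⁻¹ = V.det⁻¹ • !![γ + δ + ν, ν; μ * sstar, γ + δ + μ * sstar] := by
    rw [Matrix.inv_def, Ring.inverse_eq_inv]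
    congr 1
    simp [hV, Matrix.adjugate_fin_two_of]
  have hM : !![β * (1 - α) ^ 2 * s, β * (1 - α) * s; β * (1 - α) * sstar, β * sstar] * V⁻¹
      = V.det⁻¹ • (!![β * (1 - α) ^ 2 * s, β * (1 - α) * s; β * (1 - α) * sstar, β * sstar] *
        !![γ + δ + ν, ν; μ * sstar, γ + δ + μ * sstar]) := by
    rw [hinv, Matrix.mul_smul]
  rw [Matrix.mul_fin_two] at hM
  have hspec : spectrum ℝ
      (!![β * (1 - α) ^ 2 * s, β * (1 - α) * s; β * (1 - α) * sstar, β * sstar] * V⁻¹)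
      = {0, R0 β γ δ α μ ν s sstar} := by
    ext x
    rw [hM, spec2_aux]
    have h00 : (V.det⁻¹ • !![β * (1 - α) ^ 2 * s * (γ + δ + ν) + β * (1 - α) * s * (μ * sstar),
        β * (1 - α) ^ 2 * s * ν + β * (1 - α) * s * (γ + δ + μ * sstar);
        β * (1 - α) * sstar * (γ + δ + ν) + β * sstar * (μ * sstar),
        β * (1 - α) * sstar * ν + β * sstar * (γ + δ + μ * sstar)] : Matrix (Fin 2) (Fin 2) ℝ)
      = V.det⁻¹ • !![β * (1 - α) ^ 2 * s * (γ + δ + ν) + β * (1 - α) * s * (μ * sstar),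
        β * (1 - α) ^ 2 * s * ν + β * (1 - α) * s * (γ + δ + μ * sstar);
        β * (1 - α) * sstar * (γ + δ + ν) + β * sstar * (μ * sstar),
        β * (1 - α) * sstar * ν + β * sstar * (γ + δ + μ * sstar)] := rfl
    have key : (x - V.det⁻¹ * (β * (1 - α) ^ 2 * s * (γ + δ + ν) + β * (1 - α) * s * (μ * sstar)))
        * (x - V.det⁻¹ * (β * (1 - α) * sstar * ν + β * sstar * (γ + δ + μ * sstar)))
        - V.det⁻¹ * (β * (1 - α) ^ 2 * s * ν + β * (1 - α) * s * (γ + δ + μ * sstar))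
          * (V.det⁻¹ * (β * (1 - α) * sstar * (γ + δ + ν) + β * sstar * (μ * sstar)))
        = x * (x - R0 β γ δ α μ ν s sstar) := by
      rw [hdet, R0]
      field_simp
      ring
    simp only [Matrix.smul_apply, Matrix.of_apply, Matrix.cons_val', Matrix.cons_val_zero,
      Matrix.cons_val_one, Matrix.head_cons, Matrix.head_fin_const, Matrix.empty_val',
      Matrix.cons_val_fin_one, smul_eq_mul]
    rw [key, mul_eq_zero, sub_eq_zero]
    simp [Set.mem_insert_iff]
  have hR0 : 0 ≤ R0 β γ δ α μ ν s sstar := by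
    rw [R0]
    have h1 : α * ν / (γ + δ + ν + μ * sstar) ≤ 1 := by
      rw [div_le_one hE]
      nlinarith
    have h2 : (0:ℝ) ≤ 1 - α := by linarith
    have : (0:ℝ) ≤ α * (1 - α) * μ * sstar / (γ + δ + ν + μ * sstar) := by positivity
    have hb : (0:ℝ) ≤ β / (γ + δ) := by positivity
    have hterm1 : (0:ℝ) ≤ (1 - α) ^ 2 + α * (1 - α) * μ * sstar / (γ + δ + ν + μ * sstar) := by
      positivity
    have hterm2 : (0:ℝ) ≤ 1 - α * ν / (γ + δ + ν + μ * sstar) := by linarith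
    exact mul_nonneg hb (add_nonneg (mul_nonneg hs hterm1) (mul_nonneg hsstar hterm2))
  refine ⟨hspec, ?_, ?_⟩
  · exact ⟨R0 β γ δ α μ ν s sstar, by rw [hspec]; right; rfl, abs_of_nonneg hR0⟩
  · rintro y ⟨x, hx, rfl⟩
    rw [hspec] at hx
    rcases hx with rfl | rfl
    · simpa using hR0
    · simp [abs_of_nonneg hR0]
end

section
/- Assume b, δ, β, γ, μ > 0, ν ≥ 0 and α ∈ (0,1]. The function θ ↦ ℛ₀(b/δ − θ, θ), where ℛ₀(s,s*) = (β/(γ+δ))·( s[(1−α)² + α(1−α)μs*/(γ+δ+ν+μs*)] + s*[1 − αν/(γ+δ+ν+μs*)] ), is strictly increasing on the interval [0, b/δ]. -/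
/-- along the boundary line `s + s* = b/δ`, the map
`θ ↦ ℛ₀(b/δ - θ, θ)` is strictly increasing on `[0, b/δ]`. -/
theorem R0_strict_mono_on_boundary
    (b δ β γ α μ ν : ℝ)
    (hb : 0 < b) (hδ : 0 < δ) (hβ : 0 < β) (hγ : 0 < γ)
    (hα : α ∈ Set.Ioc (0 : ℝ) 1) (hμ : 0 < μ) (hν : 0 ≤ ν) :
    StrictMonoOn (fun θ => R0 β γ δ α μ ν (b / δ - θ) θ) (Set.Icc 0 (b / δ)) := by
  obtain ⟨hα0, hα1⟩ := hα
  intro x hx y hy hxy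
  obtain ⟨hx0, hxS⟩ := hx
  obtain ⟨hy0, hyS⟩ := hy
  simp only [R0]
  have hc : 0 < γ + δ := by linarith
  have hDx : 0 < γ + δ + ν + μ * x := by nlinarith
  have hDy : 0 < γ + δ + ν + μ * y := by nlinarith
  have hS0 : 0 ≤ b / δ := by positivity
  have h1α : 0 ≤ 1 - α := by linarith
  set T : ℝ := (γ + δ + ν) * ((2 - α) * (γ + δ) + (1 - α) * ν + (1 - α) * (μ * (b / δ)))
      + (γ + δ + ν) * (μ * (x + y)) + μ ^ 2 * (x * y) with hT_def
  have hcν : 0 < γ + δ + ν := by linarith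
  have hA : 0 < (2 - α) * (γ + δ) + (1 - α) * ν + (1 - α) * (μ * (b / δ)) := by
    have h1 : 0 < (2 - α) * (γ + δ) := by nlinarith
    have h2 : 0 ≤ (1 - α) * ν := mul_nonneg h1α hν
    have h3 : 0 ≤ (1 - α) * (μ * (b / δ)) := mul_nonneg h1α (mul_nonneg hμ.le hS0)
    linarith
  have hT : 0 < T := by
    have h1 : 0 < (γ + δ + ν) * ((2 - α) * (γ + δ) + (1 - α) * ν + (1 - α) * (μ * (b / δ))) :=
      mul_pos hcν hA
    have h2 : 0 ≤ (γ + δ + ν) * (μ * (x + y)) :=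
      mul_nonneg hcν.le (mul_nonneg hμ.le (by linarith))
    have h3 : 0 ≤ μ ^ 2 * (x * y) := mul_nonneg (sq_nonneg μ) (mul_nonneg hx0 hy0)
    rw [hT_def]
    linarith
  have key :
      ((b / δ - y) * ((1 - α) ^ 2 + α * (1 - α) * μ * y / (γ + δ + ν + μ * y)) +
        y * (1 - α * ν / (γ + δ + ν + μ * y)))
      - ((b / δ - x) * ((1 - α) ^ 2 + α * (1 - α) * μ * x / (γ + δ + ν + μ * x)) +
        x * (1 - α * ν / (γ + δ + ν + μ * x)))
      = (y - x) * α * T / ((γ + δ + ν + μ * x) * (γ + δ + ν + μ * y)) := by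
    rw [hT_def]
    field_simp
    ring
  have hpos : 0 < (y - x) * α * T / ((γ + δ + ν + μ * x) * (γ + δ + ν + μ * y)) :=
    div_pos (mul_pos (mul_pos (sub_pos.2 hxy) hα0) hT) (mul_pos hDx hDy)
  have hβc : 0 < β / (γ + δ) := div_pos hβ hc
  apply mul_lt_mul_of_pos_left _ hβc
  linarith
end

section
/- Assume b, δ, β, γ, μ > 0, ν ≥ 0 and α ∈ (0,1]. The maximum value of ℛ₀(s,s*) = (β/(γ+δ))·( s[(1−α)² + α(1−α)μs*/(γ+δ+ν+μs*)] + s*[1 − αν/(γ+δ+ν+μs*)] ) over the set {(s,s*) : s ≥ 0, s* ≥ 0, s + s* ≤ b/δ} is attained at (s, s*) = (0, b/δ); that is, ℛ₀(s,s*) ≤ ℛ₀(0, b/δ) for all such (s,s*). -/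
/-- over the admissible simplex `{(s, s*) : s, s* ≥ 0, s + s* ≤ b/δ}`,
the reproductive ratio `ℛ₀` is maximized at `(0, b/δ)`. -/
theorem R0_max_at_fully_noncompliant
    (b δ β γ α μ ν : ℝ)
    (hb : 0 < b) (hδ : 0 < δ) (hβ : 0 < β) (hγ : 0 < γ)
    (hα : α ∈ Set.Ioc (0 : ℝ) 1) (hμ : 0 < μ) (hν : 0 ≤ ν) :
    ∀ s sstar : ℝ, 0 ≤ s → 0 ≤ sstar → s + sstar ≤ b / δ →
      R0 β γ δ α μ ν s sstar ≤ R0 β γ δ α μ ν 0 (b / δ) := by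
  intro s sstar hs hss hsum
  obtain ⟨hα0, hα1⟩ := hα
  have hD : (0:ℝ) < γ + δ := by linarith
  have hbδ : 0 < b / δ := div_pos hb hδ
  have hQ : (0:ℝ) < γ + δ + ν + μ * sstar := by positivity
  have hQb : (0:ℝ) < γ + δ + ν + μ * (b / δ) := by positivity
  set Q := γ + δ + ν + μ * sstar with hQdef
  set Qb := γ + δ + ν + μ * (b / δ) with hQbdef
  unfold R0
  apply mul_le_mul_of_nonneg_left _ (le_of_lt (div_pos hβ hD))
  have hsstarle : sstar ≤ b / δ := by linarith
  have hQQb : Q ≤ Qb := by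
    have : μ * sstar ≤ μ * (b / δ) := by nlinarith
    simp only [hQdef, hQbdef]; linarith
  -- key1 : coefficient of s is at most coefficient of sstar
  have key1 : (1 - α) ^ 2 + α * (1 - α) * μ * sstar / Q ≤ 1 - α * ν / Q := by
    have hdiff : 1 - α * ν / Q - ((1 - α) ^ 2 + α * (1 - α) * μ * sstar / Q)
        = α * ((2 - α) * (γ + δ) + (1 - α) * ν + μ * sstar) / Q := by
      field_simp [hQdef]
      ring
    have hnum : 0 ≤ α * ((2 - α) * (γ + δ) + (1 - α) * ν + μ * sstar) := by
      have h1 : 0 ≤ (2 - α) * (γ + δ) := by nlinarith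
      have h2 : 0 ≤ (1 - α) * ν := by nlinarith
      have h3 : 0 ≤ μ * sstar := by positivity
      nlinarith
    have : 0 ≤ α * ((2 - α) * (γ + δ) + (1 - α) * ν + μ * sstar) / Q :=
      div_nonneg hnum hQ.le
    linarith
  -- key2 : coefficient of sstar is nonnegative
  have key2 : 0 ≤ 1 - α * ν / Q := by
    have h1 : α * ν ≤ Q := by
      have : α * ν ≤ ν := by nlinarith
      simp only [hQdef]; nlinarith
    have := (div_le_one hQ).2 h1
    linarith
  -- key3 : monotonicity in sstar of the last factor
  have key3 : α * ν / Qb ≤ α * ν / Q := by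
    apply div_le_div_of_nonneg_left _ hQ hQQb
    positivity
  have step1 : s * ((1 - α) ^ 2 + α * (1 - α) * μ * sstar / Q) +
      sstar * (1 - α * ν / Q) ≤ (s + sstar) * (1 - α * ν / Q) := by
    have := mul_le_mul_of_nonneg_left key1 hs
    nlinarith
  have step2 : (s + sstar) * (1 - α * ν / Q) ≤ (b / δ) * (1 - α * ν / Q) :=
    mul_le_mul_of_nonneg_right hsum key2
  have step3 : (b / δ) * (1 - α * ν / Q) ≤ (b / δ) * (1 - α * ν / Qb) := by
    have : 1 - α * ν / Q ≤ 1 - α * ν / Qb := by linarith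
    exact mul_le_mul_of_nonneg_left this hbδ.le
  calc s * ((1 - α) ^ 2 + α * (1 - α) * μ * sstar / Q) + sstar * (1 - α * ν / Q)
      ≤ (b / δ) * (1 - α * ν / Qb) := by linarith
    _ = 0 * ((1 - α) ^ 2 + α * (1 - α) * μ * (b / δ) / Qb) +
        (b / δ) * (1 - α * ν / Qb) := by ring
end

section
/- Assume b, δ, β, γ, μ > 0, ν ≥ 0, α ∈ (0,1], ξ ∈ [0,1], and b/δ ≥ 1. If ℛ₀(0, b/δ) < 1, then the set U₀ = {(S,I,R,S*,I*,R*) ∈ ℝ⁶₊ : I = I* = R = R* = 0, S + S* ≤ b/δ} is disease-free-stable for the deterministic SIR model with noncompliance: there exist an open set Z containing U₀ in the nonnegative orthant and constants c₁, c₂ > 0 such that every nonnegative solution x(t) = (S,I,R,S*,I*,R*)(t) of the system with x(0) ∈ Z satisfies I(t) ≤ c₁·max{I(0), I*(0)}·e^{−c₂ t} and I*(t) ≤ c₁·max{I(0), I*(0)}·e^{−c₂ t} for all t ≥ 0. -/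
lemma const_of_deriv_zero (f : ℝ → ℝ) (hd : ∀ u : ℝ, 0 ≤ u → HasDerivAt f 0 u) :
    ∀ t : ℝ, 0 ≤ t → f t = f 0 := by
  have hc : ContinuousOn f (Set.Ici 0) := fun u hu =>
    (hd u hu).continuousAt.continuousWithinAt
  have hdiff : DifferentiableOn ℝ f (interior (Set.Ici (0:ℝ))) := by
    rw [interior_Ici]
    exact fun u hu => ((hd u (le_of_lt hu)).differentiableAt).differentiableWithinAt
  have hderiv : ∀ u ∈ interior (Set.Ici (0:ℝ)), deriv f u = 0 := by
    rw [interior_Ici]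
    exact fun u hu => (hd u (le_of_lt hu)).deriv
  have hmono := monotoneOn_of_deriv_nonneg (convex_Ici 0) hc hdiff
    (fun u hu => ge_of_eq (hderiv u hu))
  have hanti := antitoneOn_of_deriv_nonpos (convex_Ici 0) hc hdiff
    (fun u hu => le_of_eq (hderiv u hu))
  intro t ht
  exact le_antisymm (hanti Set.self_mem_Ici ht ht) (hmono Set.self_mem_Ici ht ht)

lemma decay_of_deriv_le (f f' : ℝ → ℝ) (c : ℝ)
    (hd : ∀ u : ℝ, 0 ≤ u → HasDerivAt f (f' u) u)
    (hle : ∀ u : ℝ, 0 ≤ u → f' u ≤ -c * f u) :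
    ∀ t : ℝ, 0 ≤ t → f t ≤ f 0 * Real.exp (-(c*t)) := by
  set g : ℝ → ℝ := fun u => f u * Real.exp (c*u) with hg
  have hgd : ∀ u : ℝ, 0 ≤ u →
      HasDerivAt g (f' u * Real.exp (c*u) + f u * (Real.exp (c*u) * (c*1))) u := by
    intro u hu
    exact (hd u hu).mul (((hasDerivAt_id u).const_mul c).exp)
  have hc : ContinuousOn g (Set.Ici 0) := fun u hu =>
    (hgd u hu).continuousAt.continuousWithinAt
  have hdiff : DifferentiableOn ℝ g (interior (Set.Ici (0:ℝ))) := by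
    rw [interior_Ici]
    exact fun u hu => ((hgd u (le_of_lt hu)).differentiableAt).differentiableWithinAt
  have hanti := antitoneOn_of_deriv_nonpos (convex_Ici 0) hc hdiff (fun u hu => by
    rw [interior_Ici] at hu
    rw [(hgd u hu.le).deriv]
    have h1 := hle u hu.le
    have h2 := Real.exp_pos (c*u)
    nlinarith [mul_le_mul_of_nonneg_right h1 h2.le])
  intro t ht
  have h := hanti Set.self_mem_Ici ht ht
  simp only [hg] at h
  rw [mul_zero, Real.exp_zero, mul_one] at h
  have h2 := mul_le_mul_of_nonneg_right h (Real.exp_pos (-(c*t))).le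
  rwa [mul_assoc, ← Real.exp_add, add_neg_cancel, Real.exp_zero, mul_one] at h2

set_option maxHeartbeats 1000000 in
lemma sir_coeff_bound (β γ δ α μ ν n' a c : ℝ)
    (hβ : 0 < β) (hμ : 0 < μ) (hν : 0 ≤ ν) (hα1 : α ≤ 1)
    (hn' : 0 < n') (hapos : 0 < a) (hcpos : 0 < c)
    (hc1 : β*(1-α)^2*n' ≤ (γ+δ) - c)
    (hc2 : β*(1-α)*n' + μ*n' ≤ a*((γ+δ) + μ*n' - c))
    (hc3 : a*(β*(1-α)*n' + ν) ≤ (γ+δ) + ν - c)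
    (hc4 : β*n' + a*ν ≤ (γ+δ) + ν - c)
    (hc5 : c ≤ γ+δ)
    (Sv Iv Rv Ssv Isv Rsv : ℝ)
    (hS : 0 ≤ Sv) (hI : 0 ≤ Iv) (hR : 0 ≤ Rv) (hSs : 0 ≤ Ssv) (hIs : 0 ≤ Isv)
    (hRs : 0 ≤ Rsv)
    (hsum : Sv + Iv + Rv + Ssv + Isv + Rsv ≤ n') :
    a * (β * (1 - α) * Sv * ((1 - α) * Iv + Isv) - γ * Iv
        - μ * Iv * (Ssv + Isv + Rsv) + ν * Isv - δ * Iv)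
      + (β * Ssv * ((1 - α) * Iv + Isv) - γ * Isv
        + μ * Iv * (Ssv + Isv + Rsv) - ν * Isv - δ * Isv)
      ≤ -c * (a * Iv + Isv) := by
  set Nst : ℝ := Ssv + Isv + Rsv with hNst
  have hNstnn : 0 ≤ Nst := by positivity
  have hSN : Sv + Nst ≤ n' := by simp only [hNst]; linarith
  have hSsN : Ssv ≤ Nst := by simp only [hNst]; linarith
  have h1α : (0:ℝ) ≤ 1 - α := by linarith
  -- key1 : bound for the I-coefficient
  have key1 : a*β*(1-α)^2*Sv + (β*(1-α) + (1-a)*μ)*Nst ≤ a*((γ+δ) - c) := by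
    set M : ℝ := max (a*β*(1-α)^2) (max (β*(1-α) + (1-a)*μ) 0) with hM
    have hMnn : 0 ≤ M := le_trans (le_max_right _ _) (le_max_right _ _)
    have e1 : a*β*(1-α)^2*Sv ≤ M * Sv :=
      mul_le_mul_of_nonneg_right (le_max_left _ _) hS
    have e2 : (β*(1-α) + (1-a)*μ)*Nst ≤ M * Nst :=
      mul_le_mul_of_nonneg_right (le_trans (le_max_left _ _) (le_max_right _ _)) hNstnn
    have e3 : M * Sv + M * Nst ≤ M * n' := by
      have := mul_le_mul_of_nonneg_left hSN hMnn
      nlinarith [this]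
    have e4 : M * n' ≤ a*((γ+δ) - c) := by
      have c1 : (a*β*(1-α)^2) * n' ≤ a*((γ+δ) - c) := by
        nlinarith [mul_le_mul_of_nonneg_left hc1 hapos.le]
      have c2 : (β*(1-α) + (1-a)*μ) * n' ≤ a*((γ+δ) - c) := by nlinarith [hc2]
      have c3 : (0:ℝ) ≤ a*((γ+δ) - c) := mul_nonneg hapos.le (by linarith)
      have hMcases : M = a*β*(1-α)^2 ∨ M = (β*(1-α) + (1-a)*μ) ∨ M = 0 := by
        rw [hM]
        rcases max_choice (a*β*(1-α)^2) (max (β*(1-α) + (1-a)*μ) 0) with h | h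
        · exact Or.inl h
        · rw [h]
          rcases max_choice (β*(1-α) + (1-a)*μ) 0 with h2 | h2
          · exact Or.inr (Or.inl h2)
          · exact Or.inr (Or.inr h2)
      rcases hMcases with h | h | h <;> rw [h]
      · exact c1
      · exact c2
      · rw [zero_mul]; exact c3
    linarith
  -- key2 : bound for the Is-coefficient
  have key2 : a*β*(1-α)*Sv + β*Ssv ≤ (γ+δ) + ν - a*ν - c := by
    set M : ℝ := max (a*β*(1-α)) β with hM
    have hMnn : 0 ≤ M := le_trans hβ.le (le_max_right _ _)
    have e1 : a*β*(1-α)*Sv ≤ M * Sv := mul_le_mul_of_nonneg_right (le_max_left _ _) hS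
    have e2 : β*Ssv ≤ M * Ssv := mul_le_mul_of_nonneg_right (le_max_right _ _) hSs
    have hSsn : Sv + Ssv ≤ n' := by linarith
    have e3 : M * Sv + M * Ssv ≤ M * n' := by
      have := mul_le_mul_of_nonneg_left hSsn hMnn
      nlinarith [this]
    have e4 : M * n' ≤ (γ+δ) + ν - a*ν - c := by
      have c1 : (a*β*(1-α)) * n' ≤ (γ+δ) + ν - a*ν - c := by nlinarith [hc3]
      have c2 : β * n' ≤ (γ+δ) + ν - a*ν - c := by nlinarith [hc4]
      have hMcases : M = a*β*(1-α) ∨ M = β := by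
        rw [hM]; exact max_choice _ _
      rcases hMcases with h | h <;> rw [h]
      · exact c1
      · exact c2
    linarith
  -- combine
  have coeffI : a*β*(1-α)^2*Sv - a*(γ+δ) - a*μ*Nst + β*(1-α)*Ssv + μ*Nst ≤ -(c*a) := by
    have h := mul_le_mul_of_nonneg_left hSsN h1α
    nlinarith [key1, mul_le_mul_of_nonneg_left h hβ.le]
  have coeffIs : a*β*(1-α)*Sv + a*ν + β*Ssv - ((γ+δ)+ν) ≤ -c := by linarith
  calc a * (β * (1 - α) * Sv * ((1 - α) * Iv + Isv) - γ * Iv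
        - μ * Iv * Nst + ν * Isv - δ * Iv)
      + (β * Ssv * ((1 - α) * Iv + Isv) - γ * Isv
        + μ * Iv * Nst - ν * Isv - δ * Isv)
      = (a*β*(1-α)^2*Sv - a*(γ+δ) - a*μ*Nst + β*(1-α)*Ssv + μ*Nst) * Iv
        + (a*β*(1-α)*Sv + a*ν + β*Ssv - ((γ+δ)+ν)) * Isv := by ring
    _ ≤ (-(c*a)) * Iv + (-c) * Isv := by
        exact add_le_add (mul_le_mul_of_nonneg_right coeffI hI)
          (mul_le_mul_of_nonneg_right coeffIs hIs)
    _ = -c * (a * Iv + Isv) := by ring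

set_option maxHeartbeats 4000000

/-- if `ℛ₀(0, b/δ) < 1` then the set `U₀` of admissible disease free
states (ordering `(S, I, R, S*, I*, R*)`) is disease-free-stable: there is an open
neighborhood `Z` of `U₀` and constants `c₁, c₂ > 0` such that every nonnegative
solution starting in `Z` has `I(t), I*(t) ≤ c₁ max{I(0), I*(0)} e^{-c₂ t}`. -/
theorem disease_free_set_stable
    (b δ β γ α μ ν ξ : ℝ)
    (hb : 0 < b) (hδ : 0 < δ) (hβ : 0 < β) (hγ : 0 < γ)
    (hα : α ∈ Set.Ioc (0 : ℝ) 1) (hμ : 0 < μ) (hν : 0 ≤ ν)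
    (hξ : ξ ∈ Set.Icc (0 : ℝ) 1) (hpop : 1 ≤ b / δ)
    (hR0 : R0 β γ δ α μ ν 0 (b / δ) < 1) :
    ∃ (Z : Set (ℝ × ℝ × ℝ × ℝ × ℝ × ℝ)) (c₁ c₂ : ℝ),
      IsOpen Z ∧
      {p : ℝ × ℝ × ℝ × ℝ × ℝ × ℝ |
        0 ≤ p.1 ∧ p.2.1 = 0 ∧ p.2.2.1 = 0 ∧ 0 ≤ p.2.2.2.1 ∧
        p.2.2.2.2.1 = 0 ∧ p.2.2.2.2.2 = 0 ∧ p.1 + p.2.2.2.1 ≤ b / δ} ⊆ Z ∧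
      0 < c₁ ∧ 0 < c₂ ∧
      ∀ S I R Ss Is Rs : ℝ → ℝ,
        (∀ t : ℝ, 0 ≤ t → IsSIRSol b δ β γ α μ ν ξ S I R Ss Is Rs t) →
        (∀ t : ℝ, 0 ≤ t →
          0 ≤ S t ∧ 0 ≤ I t ∧ 0 ≤ R t ∧ 0 ≤ Ss t ∧ 0 ≤ Is t ∧ 0 ≤ Rs t) →
        (S 0, I 0, R 0, Ss 0, Is 0, Rs 0) ∈ Z →
        ∀ t : ℝ, 0 ≤ t →
          I t ≤ c₁ * max (I 0) (Is 0) * Real.exp (-c₂ * t) ∧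
          Is t ≤ c₁ * max (I 0) (Is 0) * Real.exp (-c₂ * t) := by
  obtain ⟨hα0, hα1⟩ := hα
  set n := b / δ with hn
  have hnpos : 0 < n := div_pos hb hδ
  have hq : 0 < γ + δ := by linarith
  -- key inequality extracted from `R0 < 1`
  have hKey : β * n * ((γ+δ+ν+μ*n) - α*ν) < (γ+δ) * (γ+δ+ν+μ*n) := by
    have hD : 0 < γ+δ+ν+μ*n := by positivity
    have h := hR0
    unfold R0 at h
    rw [zero_mul, zero_add, div_mul_eq_mul_div, div_lt_one hq] at h
    have h2 : 1 - α*ν/(γ+δ+ν+μ*n) = ((γ+δ+ν+μ*n) - α*ν)/(γ+δ+ν+μ*n) := by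
      field_simp
    rw [h2, mul_div_assoc', ← mul_div_assoc, div_lt_iff₀ hD] at h
    linarith
  have hD : 0 < γ+δ+ν+μ*n := by positivity
  have hβn : 0 ≤ β * n := by positivity
  -- three strict consequences at `n`
  have hA : β*(1-α)^2*n < γ+δ := by
    nlinarith [mul_nonneg hβn (by positivity : (0:ℝ) ≤ α*(γ+δ+μ*n)),
      mul_nonneg hβn (mul_nonneg (mul_nonneg hα0.le (by linarith : (0:ℝ) ≤ 1-α)) hD.le),
      mul_pos hD hD, hD]
  have hPQ : β*(1-α)*n < γ+δ := by
    nlinarith [mul_nonneg hβn (by positivity : (0:ℝ) ≤ α*(γ+δ+μ*n)), hD]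
  have hC1 : (β*(1-α)*n + μ*n)*(β*(1-α)*n + ν) < (γ+δ+ν)*(γ+δ+μ*n) := by
    nlinarith [mul_pos (sub_pos.2 hPQ)
      (show (0:ℝ) < β*(1-α)*n + (γ+δ) + ν + μ*n by
        nlinarith [mul_nonneg hβn (by linarith : (0:ℝ) ≤ 1-α)])]
  have hC2 : (β*(1-α)*n + μ*n)*ν < (γ+δ+ν-β*n)*(γ+δ+μ*n) := by nlinarith [hKey]
  -- perturb to `n' > n` keeping the strict inequalities
  obtain ⟨n', hnn', hA', hC1', hC2'⟩ : ∃ n', n < n' ∧ (β*(1-α)^2*n' < γ+δ) ∧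
      ((β*(1-α)*n' + μ*n')*(β*(1-α)*n' + ν) < (γ+δ+ν)*(γ+δ+μ*n')) ∧
      ((β*(1-α)*n' + μ*n')*ν < (γ+δ+ν-β*n')*(γ+δ+μ*n')) := by
    set G : ℝ → ℝ := fun x => min ((γ+δ) - β*(1-α)^2*x)
      (min ((γ+δ+ν)*(γ+δ+μ*x) - (β*(1-α)*x + μ*x)*(β*(1-α)*x + ν))
        ((γ+δ+ν-β*x)*(γ+δ+μ*x) - (β*(1-α)*x + μ*x)*ν)) with hG
    have hGcont : Continuous G := by
      apply Continuous.min
      · fun_prop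
      · apply Continuous.min <;> fun_prop
    have hGn : 0 < G n := by
      simp only [hG, lt_min_iff]
      refine ⟨by linarith, by linarith, by linarith⟩
    have hmem : G ⁻¹' Set.Ioi 0 ∈ nhds n :=
      hGcont.continuousAt.preimage_mem_nhds (Ioi_mem_nhds hGn)
    obtain ⟨ε, hε, hball⟩ := Metric.mem_nhds_iff.1 hmem
    refine ⟨n + ε/2, by linarith, ?_⟩
    have h : 0 < G (n + ε/2) := by
      have : n + ε/2 ∈ Metric.ball n ε := by
        simp only [Metric.mem_ball, Real.dist_eq]
        rw [show n + ε/2 - n = ε/2 by ring, abs_of_nonneg (by linarith : (0:ℝ) ≤ ε/2)]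
        linarith
      exact hball this
    simp only [hG, lt_min_iff] at h
    exact ⟨by linarith [h.1], by linarith [h.2.1], by linarith [h.2.2]⟩
  have hn'pos : 0 < n' := lt_trans hnpos hnn'
  -- choose the constants `a` (Lyapunov weight) and `c` (decay rate)
  obtain ⟨a, c, hapos, hcpos, hc1, hc2, hc3, hc4, hc5⟩ :
      ∃ a c : ℝ, 0 < a ∧ 0 < c ∧
      (β*(1-α)^2*n' ≤ (γ+δ) - c) ∧
      (β*(1-α)*n' + μ*n' ≤ a*((γ+δ) + μ*n' - c)) ∧
      (a*(β*(1-α)*n' + ν) ≤ (γ+δ) + ν - c) ∧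
      (β*n' + a*ν ≤ (γ+δ) + ν - c) ∧
      (c ≤ γ+δ) := by
    have hp'nn : 0 ≤ β*(1-α)*n' := mul_nonneg (mul_nonneg hβ.le (by linarith)) hn'pos.le
    have hqm : 0 < (γ+δ) + μ*n' := by positivity
    set a0 : ℝ := (β*(1-α)*n' + μ*n')/((γ+δ) + μ*n') with ha0
    have ha0pos : 0 < a0 := by
      apply div_pos (by nlinarith) hqm
    have hS1 : a0*(β*(1-α)*n' + ν) < (γ+δ) + ν := by
      rw [ha0, div_mul_eq_mul_div, div_lt_iff₀ hqm]
      nlinarith [hC1']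
    have hS2 : β*n' + a0*ν < (γ+δ) + ν := by
      have : a0*ν < (γ+δ)+ν-β*n' := by
        rw [ha0, div_mul_eq_mul_div, div_lt_iff₀ hqm]
        nlinarith [hC2']
      linarith
    set θ1 : ℝ := ((γ+δ)+ν - a0*(β*(1-α)*n' + ν))/(2*(β*(1-α)*n'+ν+1)) with hθ1
    set θ2 : ℝ := ((γ+δ)+ν - (β*n' + a0*ν))/(2*(ν+1)) with hθ2
    have hθ1pos : 0 < θ1 := div_pos (by linarith) (by positivity)
    have hθ2pos : 0 < θ2 := div_pos (by linarith) (by positivity)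
    set a : ℝ := a0 + min θ1 θ2 with ha
    have hθpos : 0 < min θ1 θ2 := lt_min hθ1pos hθ2pos
    have hapos : 0 < a := by positivity
    have ha0lt : a0 < a := by simp only [ha]; linarith
    have ha1 : a*(β*(1-α)*n' + ν) < (γ+δ)+ν := by
      have h1 : (min θ1 θ2)*(β*(1-α)*n'+ν) ≤ θ1*(β*(1-α)*n'+ν) :=
        mul_le_mul_of_nonneg_right (min_le_left _ _) (by positivity)
      have h2 : θ1*(β*(1-α)*n'+ν) < (γ+δ)+ν - a0*(β*(1-α)*n' + ν) := by
        rw [hθ1, div_mul_eq_mul_div, div_lt_iff₀ (by positivity)]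
        exact mul_lt_mul_of_pos_left (by linarith) (by linarith)
      simp only [ha]
      nlinarith [h1, h2]
    have ha2 : β*n' + a*ν < (γ+δ)+ν := by
      have h1 : (min θ1 θ2)*ν ≤ θ2*ν :=
        mul_le_mul_of_nonneg_right (min_le_right _ _) hν
      have h2 : θ2*ν < (γ+δ)+ν - (β*n' + a0*ν) := by
        rw [hθ2, div_mul_eq_mul_div, div_lt_iff₀ (by positivity)]
        exact mul_lt_mul_of_pos_left (by linarith) (by linarith)
      simp only [ha]
      nlinarith [h1, h2]
    set c : ℝ := min ((γ+δ) - β*(1-α)^2*n')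
      (min ((a*((γ+δ)+μ*n') - (β*(1-α)*n' + μ*n'))/a)
        (min ((γ+δ)+ν - a*(β*(1-α)*n' + ν)) (min ((γ+δ)+ν - (β*n' + a*ν)) (γ+δ)))) with hc
    have hnum2 : 0 < a*((γ+δ)+μ*n') - (β*(1-α)*n' + μ*n') := by
      have : a0*((γ+δ)+μ*n') = β*(1-α)*n' + μ*n' := by
        rw [ha0]; field_simp
      nlinarith [mul_lt_mul_of_pos_right ha0lt hqm]
    have hcpos : 0 < c := by
      simp only [hc, lt_min_iff]
      refine ⟨by linarith, div_pos hnum2 hapos, by linarith, by linarith, hq⟩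
    have hcA : c ≤ (γ+δ) - β*(1-α)^2*n' := by rw [hc]; exact min_le_left _ _
    have hcB : c ≤ (a*((γ+δ)+μ*n') - (β*(1-α)*n' + μ*n'))/a := by
      rw [hc]; exact (min_le_right _ _).trans (min_le_left _ _)
    have hcC : c ≤ (γ+δ)+ν - a*(β*(1-α)*n' + ν) := by
      rw [hc]; exact (min_le_right _ _).trans ((min_le_right _ _).trans (min_le_left _ _))
    have hcD : c ≤ (γ+δ)+ν - (β*n' + a*ν) := by
      rw [hc]
      exact (min_le_right _ _).trans ((min_le_right _ _).trans
        ((min_le_right _ _).trans (min_le_left _ _)))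
    have hcE : c ≤ γ+δ := by
      rw [hc]
      exact (min_le_right _ _).trans ((min_le_right _ _).trans
        ((min_le_right _ _).trans (min_le_right _ _)))
    rw [le_div_iff₀ hapos] at hcB
    exact ⟨a, c, hapos, hcpos, by linarith, by nlinarith [hcB], by linarith, by linarith, hcE⟩
  -- the open neighborhood and the constants
  refine ⟨{p : ℝ × ℝ × ℝ × ℝ × ℝ × ℝ |
      p.1 + p.2.1 + p.2.2.1 + p.2.2.2.1 + p.2.2.2.2.1 + p.2.2.2.2.2 < n'},
    (a+1)/a + (a+1), c, ?_, ?_, by positivity, hcpos, ?_⟩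
  · exact isOpen_lt (by fun_prop) continuous_const
  · intro p hp
    obtain ⟨h1, h2, h3, h4, h5, h6, h7⟩ := hp
    simp only [Set.mem_setOf_eq]
    rw [h2, h3, h5, h6]
    have h7' : p.1 + p.2.2.2.1 ≤ n := h7
    linarith
  · intro S I R Ss Is Rs hsol hpos hZ0 t ht
    simp only [Set.mem_setOf_eq] at hZ0
    -- total population stays below n'
    have hNle : ∀ u : ℝ, 0 ≤ u → S u + I u + R u + Ss u + Is u + Rs u < n' := by
      have hφd : ∀ u : ℝ, 0 ≤ u → HasDerivAt
          (fun u => (S u + I u + R u + Ss u + Is u + Rs u - b/δ) * Real.exp (δ*u)) 0 u := by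
        intro u hu
        obtain ⟨h1, h2, h3, h4, h5, h6⟩ := hsol u hu
        have hN : HasDerivAt (fun u => S u + I u + R u + Ss u + Is u + Rs u)
            (b - δ * (S u + I u + R u + Ss u + Is u + Rs u)) u := by
          have h := ((((h1.add h2).add h3).add h4).add h5).add h6
          exact h.congr_deriv (by ring)
        have h := (hN.sub_const (b/δ)).mul (((hasDerivAt_id u).const_mul δ).exp)
        exact h.congr_deriv (by simp only [id]; field_simp; ring)
      have hconst := const_of_deriv_zero _ hφd
      intro u hu
      have h := hconst u hu
      simp only [mul_zero, Real.exp_zero, mul_one] at h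
      have hE1 : (1:ℝ) ≤ Real.exp (δ*u) := by
        rw [← Real.exp_zero]
        exact Real.exp_le_exp.2 (by positivity)
      have hEpos : 0 < Real.exp (δ*u) := Real.exp_pos _
      rcases le_total (S u + I u + R u + Ss u + Is u + Rs u) (b/δ) with hle | hge
      · have hle' : S u + I u + R u + Ss u + Is u + Rs u ≤ n := hle
        linarith
      · nlinarith [h, hE1, hEpos]
    -- the Lyapunov function decays
    have hdecay := decay_of_deriv_le (fun u => a * I u + Is u)
      (fun u => a * (β * (1 - α) * S u * ((1 - α) * I u + Is u) - γ * I u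
          - μ * I u * (Ss u + Is u + Rs u) + ν * Is u - δ * I u)
        + (β * Ss u * ((1 - α) * I u + Is u) - γ * Is u
          + μ * I u * (Ss u + Is u + Rs u) - ν * Is u - δ * Is u)) c
      (by
        intro u hu
        obtain ⟨h1, h2, h3, h4, h5, h6⟩ := hsol u hu
        exact (h2.const_mul a).add h5)
      (by
        intro u hu
        obtain ⟨hS, hI, hR, hSs, hIs, hRs⟩ := hpos u hu
        have hsum : S u + I u + R u + Ss u + Is u + Rs u ≤ n' := (hNle u hu).le
        exact sir_coeff_bound β γ δ α μ ν n' a c hβ hμ hν hα1 hn'pos hapos hcpos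
          hc1 hc2 hc3 hc4 hc5 (S u) (I u) (R u) (Ss u) (Is u) (Rs u)
          hS hI hR hSs hIs hRs hsum)
      t ht
    -- conclude
    obtain ⟨hS0, hI0, hR0', hSs0, hIs0, hRs0⟩ := hpos 0 le_rfl
    obtain ⟨hSt, hIt, hRt, hSst, hIst, hRst⟩ := hpos t ht
    have hmx : 0 ≤ max (I 0) (Is 0) := le_trans hI0 (le_max_left _ _)
    have hEpos : 0 < Real.exp (-(c*t)) := Real.exp_pos _
    have hW0 : a * I 0 + Is 0 ≤ (a+1) * max (I 0) (Is 0) := by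
      have h1 := mul_le_mul_of_nonneg_left (le_max_left (I 0) (Is 0)) hapos.le
      have h2 := le_max_right (I 0) (Is 0)
      nlinarith [h1, h2]
    have hWt : a * I t + Is t ≤ (a+1) * (max (I 0) (Is 0) * Real.exp (-(c*t))) := by
      have h := mul_le_mul_of_nonneg_right hW0 hEpos.le
      have h' := hdecay
      nlinarith [h, h']
    have hME : 0 ≤ max (I 0) (Is 0) * Real.exp (-(c*t)) := mul_nonneg hmx hEpos.le
    have hexp : Real.exp (-c * t) = Real.exp (-(c*t)) := by rw [neg_mul]
    rw [hexp]
    constructor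
    · have key : I t ≤ ((a+1)/a) * (max (I 0) (Is 0) * Real.exp (-(c*t))) := by
        rw [div_mul_eq_mul_div, le_div_iff₀ hapos]
        nlinarith [hWt, hIst]
      have hnn : 0 ≤ (a+1) * (max (I 0) (Is 0) * Real.exp (-(c*t))) := by positivity
      nlinarith [key, hnn]
    · have key : Is t ≤ (a+1) * (max (I 0) (Is 0) * Real.exp (-(c*t))) := by
        nlinarith [hWt, mul_nonneg hapos.le hIt]
      have hnn : 0 ≤ ((a+1)/a) * (max (I 0) (Is 0) * Real.exp (-(c*t))) := by positivity
      nlinarith [key, hnn]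
end

section
/- Let b, δ, μ > 0 and ν ≥ 0, and take ξ = 0. Then the pairs (s, s*) with s, s* real and s* = b/δ − s satisfying the disease free equilibrium equations (1−ξ)b − μ·s·s* + ν·s* − δ·s = 0 and ξb + μ·s·s* − ν·s* − δ·s* = 0 are exactly (s,s*) = (b/δ, 0) and (s,s*) = ((δ+ν)/μ, b/δ − (δ+ν)/μ). The two pairs are distinct with both coordinates of the second pair positive if and only if b/δ > (δ+ν)/μ. -/
/-- for `ξ = 0`, the disease free equilibria `(s, s*)` with
`s* = b/δ - s` are exactly `(b/δ, 0)` and `((δ+ν)/μ, b/δ - (δ+ν)/μ)`; these two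
pairs are distinct with both coordinates of the second positive iff
`b/δ > (δ+ν)/μ`. -/
theorem dfe_xi_zero
    (b δ μ ν ξ : ℝ)
    (hb : 0 < b) (hδ : 0 < δ) (hμ : 0 < μ) (hν : 0 ≤ ν) (hξ : ξ = 0) :
    (∀ s sstar : ℝ, sstar = b / δ - s →
      (((1 - ξ) * b - μ * s * sstar + ν * sstar - δ * s = 0 ∧
        ξ * b + μ * s * sstar - ν * sstar - δ * sstar = 0) ↔
        ((s, sstar) = (b / δ, 0) ∨
         (s, sstar) = ((δ + ν) / μ, b / δ - (δ + ν) / μ)))) ∧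
    ((((b / δ, (0 : ℝ)) ≠ ((δ + ν) / μ, b / δ - (δ + ν) / μ)) ∧
        0 < (δ + ν) / μ ∧ 0 < b / δ - (δ + ν) / μ) ↔
      (δ + ν) / μ < b / δ) := by
  subst hξ
  constructor
  · intro s sstar hs
    constructor
    · rintro ⟨h1, h2⟩
      have hfac : sstar * (μ * s - (ν + δ)) = 0 := by nlinarith [h2]
      rcases mul_eq_zero.mp hfac with h | h
      · left
        have : s = b / δ := by
          have := hs; rw [h] at this; linarith
        simp [Prod.ext_iff, this, h]
      · right
        have hsv : s = (δ + ν) / μ := by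
          field_simp
          linarith
        simp [Prod.ext_iff, hsv, hs]
    · rintro (h | h) <;> simp [Prod.ext_iff] at h <;> obtain ⟨h1, h2⟩ := h <;>
        subst h1 <;> subst h2 <;> constructor <;> field_simp <;> ring
  · constructor
    · rintro ⟨_, _, h⟩
      linarith
    · intro h
      refine ⟨?_, by positivity, by linarith⟩
      intro heq
      simp [Prod.ext_iff] at heq
      linarith [heq.2]
end

section
/- Let b, δ, μ > 0, ν ≥ 0 and ξ ∈ (0,1]. Define s₊ = (1/2)( b/δ + (ν+δ)/μ + √((b/δ − (ν+δ)/μ)² + 4ξb/μ) ) and s₋ = (1/2)( b/δ + (ν+δ)/μ − √((b/δ − (ν+δ)/μ)² + 4ξb/μ) ). Then s₊ > b/δ, and 0 ≤ s₋ < b/δ; consequently (s₋, b/δ − s₋) is the unique physically meaningful disease free equilibrium, i.e., the unique solution (s,s*) of (1−ξ)b − μ·s·s* + ν·s* − δ·s = 0 and ξb + μ·s·s* − ν·s* − δ·s* = 0 with s ≥ 0 and s* ≥ 0. -/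
/-- for `ξ ∈ (0,1]`, one has `s₊ > b/δ` and `0 ≤ s₋ < b/δ`, and
`(s₋, b/δ - s₋)` is the unique physically meaningful (componentwise nonnegative)
disease free equilibrium. -/
theorem dfe_xi_positive
    (b δ μ ν ξ : ℝ)
    (hb : 0 < b) (hδ : 0 < δ) (hμ : 0 < μ) (hν : 0 ≤ ν)
    (hξ : ξ ∈ Set.Ioc (0 : ℝ) 1) :
    b / δ < (1 / 2) * (b / δ + (ν + δ) / μ
        + Real.sqrt ((b / δ - (ν + δ) / μ) ^ 2 + 4 * ξ * b / μ)) ∧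
    0 ≤ (1 / 2) * (b / δ + (ν + δ) / μ
        - Real.sqrt ((b / δ - (ν + δ) / μ) ^ 2 + 4 * ξ * b / μ)) ∧
    (1 / 2) * (b / δ + (ν + δ) / μ
        - Real.sqrt ((b / δ - (ν + δ) / μ) ^ 2 + 4 * ξ * b / μ)) < b / δ ∧
    (∀ s sstar : ℝ,
      (0 ≤ s ∧ 0 ≤ sstar ∧
        (1 - ξ) * b - μ * s * sstar + ν * sstar - δ * s = 0 ∧
        ξ * b + μ * s * sstar - ν * sstar - δ * sstar = 0) ↔
      (s = (1 / 2) * (b / δ + (ν + δ) / μ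
            - Real.sqrt ((b / δ - (ν + δ) / μ) ^ 2 + 4 * ξ * b / μ)) ∧
       sstar = b / δ - (1 / 2) * (b / δ + (ν + δ) / μ
            - Real.sqrt ((b / δ - (ν + δ) / μ) ^ 2 + 4 * ξ * b / μ)))) := by
  obtain ⟨hξ0, hξ1⟩ := hξ
  set A := b / δ with hA
  set B := (ν + δ) / μ with hB
  set D := (A - B) ^ 2 + 4 * ξ * b / μ with hDdef
  set S := Real.sqrt D with hSdef
  have hApos : 0 < A := div_pos hb hδ
  have hBpos : 0 < B := div_pos (by linarith) hμ
  have hD0 : 0 ≤ D := by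
    rw [hDdef]
    have : 0 < 4 * ξ * b / μ := by positivity
    nlinarith [sq_nonneg (A - B)]
  have hS2 : S ^ 2 = D := Real.sq_sqrt hD0
  have hS0 : 0 ≤ S := Real.sqrt_nonneg _
  have habs : |A - B| < S := by
    rw [hSdef, ← Real.sqrt_sq_eq_abs]
    apply Real.sqrt_lt_sqrt (sq_nonneg _)
    rw [hDdef]
    have : 0 < 4 * ξ * b / μ := by positivity
    linarith
  have hAeq : δ * A = b := by rw [hA]; field_simp
  have hBeq : μ * B = ν + δ := by rw [hB]; field_simp
  have hS2' : μ * S ^ 2 = μ * (A - B) ^ 2 + 4 * ξ * b := by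
    rw [hS2, hDdef]; field_simp
  have hkey : ξ * b ≤ μ * A * B := by
    have : μ * A * B = b * (ν + δ) / δ := by
      rw [hA, hB]; field_simp
    rw [this, le_div_iff₀ hδ]
    nlinarith [mul_nonneg (mul_nonneg (by linarith : (0:ℝ) ≤ 1 - ξ) hb.le) hδ.le,
      mul_nonneg hb.le hν]
  have hSle : S ≤ A + B := by
    have hD2 : D ≤ (A + B) ^ 2 := by
      rw [hDdef]
      have h4 : 4 * ξ * b / μ ≤ 4 * A * B := by
        rw [div_le_iff₀ hμ]; nlinarith
      nlinarith [sq_nonneg (A - B)]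
    calc S = Real.sqrt D := rfl
    _ ≤ Real.sqrt ((A + B) ^ 2) := Real.sqrt_le_sqrt hD2
    _ = A + B := by rw [Real.sqrt_sq (by linarith)]
  have h1 : A < (1 / 2) * (A + B + S) := by
    have := le_abs_self (A - B); linarith
  have h2 : 0 ≤ (1 / 2) * (A + B - S) := by linarith
  have h3 : (1 / 2) * (A + B - S) < A := by
    have := neg_abs_le (A - B); linarith
  refine ⟨h1, h2, h3, fun s sstar => ⟨fun ⟨hs, hst, he1, he2⟩ => ?_, fun ⟨hs, hst⟩ => ?_⟩⟩
  · -- forward direction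
    have hss : sstar = A - s := by
      have hb' : δ * (sstar - (A - s)) = 0 := by
        have hsum : b = δ * s + δ * sstar := by linarith
        linear_combination -hsum - hAeq
      have := mul_eq_zero.mp hb'
      rcases this with h | h
      · exact absurd h hδ.ne'
      · linarith
    rw [hss] at he2
    have hq : μ * ((s - (1 / 2) * (A + B - S)) * (s - (1 / 2) * (A + B + S))) = 0 := by
      linear_combination (-1 : ℝ) * he2 + (A - s) * hBeq - (1 / 4) * hS2'
    have hq2 : (s - (1 / 2) * (A + B - S)) * (s - (1 / 2) * (A + B + S)) = 0 := by
      rcases mul_eq_zero.mp hq with h | h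
      · exact absurd h hμ.ne'
      · exact h
    rcases mul_eq_zero.mp hq2 with h | h
    · constructor
      · linarith
      · rw [hss]; linarith
    · -- s = s₊, contradiction with sstar ≥ 0
      exfalso
      have : s = (1 / 2) * (A + B + S) := by linarith
      rw [hss] at hst
      linarith
  · -- backward direction
    subst hs; subst hst
    refine ⟨h2, by linarith, ?_, ?_⟩
    · have he2 : ξ * b + μ * ((1 / 2) * (A + B - S)) * (A - (1 / 2) * (A + B - S))
          - ν * (A - (1 / 2) * (A + B - S)) - δ * (A - (1 / 2) * (A + B - S)) = 0 := by
        linear_combination (A - (1 / 2) * (A + B - S)) * hBeq - (1 / 4) * hS2'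
      linear_combination -he2 - hAeq
    · linear_combination (A - (1 / 2) * (A + B - S)) * hBeq - (1 / 4) * hS2'
end

section
/- Let γ, δ, β, μ > 0, ν ≥ 0, α ∈ (0,1] and s, s* ≥ 0, and let M be the 6×6 real matrix with rows (in the variable ordering (I, I*, S, R, S*, R*)): row 1 = (γ+δ+μs*, −ν, 0, 0, 0, 0); row 2 = (−μs*, γ+δ+ν, 0, 0, 0, 0); row 3 = (β(1−α)²s, (β(1−α)+μ)s, δ+μs*, 0, μs−ν, μs); row 4 = (−γ, 0, 0, δ+μs*, 0, −ν); row 5 = (β(1−α)s*, βs*−μs, −μs*, 0, δ+ν−μs, −μs); row 6 = (0, −γ, 0, −μs*, 0, δ+ν). Then the characteristic polynomial of M is (X−(γ+δ))·(X−(γ+δ+ν+μs*))·(X−δ)²·(X−(δ+ν+μs*))·(X−(δ+ν+μ(s*−s))); equivalently, the eigenvalues of M counted with multiplicity are γ+δ, γ+δ+ν+μs*, δ, δ, δ+ν+μs*, and δ+ν+μ(s*−s). -/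
open Polynomial

/-- The Jacobian `D𝒱(x_{s,s*})` of the transfer map `𝒱 = 𝒱⁻ - 𝒱⁺` of the SIR model
with noncompliance at the disease free point `x_{s,s*} = (0,0,s,0,s*,0)`, in the
variable ordering `(I, I*, S, R, S*, R*)`. -/
def DVmatrix (γ δ β α μ ν s sstar : ℝ) : Matrix (Fin 6) (Fin 6) ℝ :=
  !![γ + δ + μ * sstar, -ν, 0, 0, 0, 0;
     -(μ * sstar), γ + δ + ν, 0, 0, 0, 0;
     β * (1 - α) ^ 2 * s, (β * (1 - α) + μ) * s, δ + μ * sstar, 0, μ * s - ν, μ * s;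
     -γ, 0, 0, δ + μ * sstar, 0, -ν;
     β * (1 - α) * sstar, β * sstar - μ * s, -(μ * sstar), 0, δ + ν - μ * s, -(μ * s);
     0, -γ, 0, -(μ * sstar), 0, δ + ν]

lemma cons_val_five {α : Type*} {m : ℕ} (x : α) (u : Fin (m + 5) → α) :
    Matrix.vecCons x u 5 =
      Matrix.vecHead (Matrix.vecTail (Matrix.vecTail (Matrix.vecTail (Matrix.vecTail u)))) :=
  rfl

set_option maxHeartbeats 1000000 in
lemma det_fin_four {R : Type*} [CommRing R] (A : Matrix (Fin 4) (Fin 4) R) :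
    A.det =
      A 0 0 * (A 1 1 * (A 2 2 * A 3 3 - A 2 3 * A 3 2) - A 1 2 * (A 2 1 * A 3 3 - A 2 3 * A 3 1)
          + A 1 3 * (A 2 1 * A 3 2 - A 2 2 * A 3 1))
        - A 0 1 * (A 1 0 * (A 2 2 * A 3 3 - A 2 3 * A 3 2) - A 1 2 * (A 2 0 * A 3 3 - A 2 3 * A 3 0)
          + A 1 3 * (A 2 0 * A 3 2 - A 2 2 * A 3 0))
        + A 0 2 * (A 1 0 * (A 2 1 * A 3 3 - A 2 3 * A 3 1) - A 1 1 * (A 2 0 * A 3 3 - A 2 3 * A 3 0)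
          + A 1 3 * (A 2 0 * A 3 1 - A 2 1 * A 3 0))
        - A 0 3 * (A 1 0 * (A 2 1 * A 3 2 - A 2 2 * A 3 1) - A 1 1 * (A 2 0 * A 3 2 - A 2 2 * A 3 0)
          + A 1 2 * (A 2 0 * A 3 1 - A 2 1 * A 3 0)) := by
  rw [Matrix.det_succ_row_zero]
  simp [Fin.sum_univ_succ, Matrix.det_fin_three, Fin.succAbove,
    show (Fin.succ 2 : Fin 4) = 3 from rfl, show Fin.castSucc (2 : Fin 3) = (2 : Fin 4) from rfl,
    show (Fin.succ 1 : Fin 4) = 2 from rfl, show (Fin.succ 0 : Fin 4) = 1 from rfl]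
  ring

set_option maxHeartbeats 2000000 in
set_option maxRecDepth 8000 in
lemma DVmatrix_charmatrix (γ δ β α μ ν s sstar : ℝ) : (DVmatrix γ δ β α μ ν s sstar).charmatrix =
      (Matrix.fromBlocks
        !![X - C (γ + δ + μ * sstar), C ν; C (μ * sstar), X - C (γ + δ + ν)]
        0
        !![-C (β * (1 - α) ^ 2 * s), -C ((β * (1 - α) + μ) * s);
           C γ, 0;
           -C (β * (1 - α) * sstar), -C (β * sstar - μ * s);
           0, C γ]
        !![X - C (δ + μ * sstar), 0, -C (μ * s - ν), -C (μ * s);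
           0, X - C (δ + μ * sstar), 0, C ν;
           C (μ * sstar), 0, X - C (δ + ν - μ * s), C (μ * s);
           0, C (μ * sstar), 0, X - C (δ + ν)]).submatrix
        finSumFinEquiv.symm finSumFinEquiv.symm := by
    have e0 : finSumFinEquiv.symm (0 : Fin (2+4)) = Sum.inl 0 := rfl
    have e1 : finSumFinEquiv.symm (1 : Fin (2+4)) = Sum.inl 1 := rfl
    have e2 : finSumFinEquiv.symm (2 : Fin (2+4)) = Sum.inr 0 := rfl
    have e3 : finSumFinEquiv.symm (3 : Fin (2+4)) = Sum.inr 1 := rfl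
    have e4 : finSumFinEquiv.symm (4 : Fin (2+4)) = Sum.inr 2 := rfl
    have e5 : finSumFinEquiv.symm (5 : Fin (2+4)) = Sum.inr 3 := rfl
    refine Matrix.ext fun i j => ?_
    fin_cases i <;> fin_cases j <;>
      simp [Matrix.charmatrix_apply, DVmatrix, Matrix.one_apply, Matrix.fromBlocks,
        e0, e1, e2, e3, e4, e5,
        Matrix.cons_val_zero, Matrix.cons_val_one, Matrix.cons_val_two, Matrix.cons_val_three,
        Matrix.cons_val_four, cons_val_five, Matrix.head_cons, Matrix.tail_cons,
        Matrix.head_fin_const] <;> ring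

set_option maxHeartbeats 2000000 in
set_option maxRecDepth 8000 in
/-- the characteristic polynomial of `D𝒱(x_{s,s*})` factors as
`(X - (γ+δ))(X - (γ+δ+ν+μs*))(X - δ)²(X - (δ+ν+μs*))(X - (δ+ν+μ(s*-s)))`;
i.e. its eigenvalues with multiplicity are `γ+δ, γ+δ+ν+μs*, δ, δ, δ+ν+μs*,
δ+ν+μ(s*-s)`. -/
theorem DVmatrix_charpoly
    (γ δ β α μ ν s sstar : ℝ)
    (hγ : 0 < γ) (hδ : 0 < δ) (hβ : 0 < β) (hα : α ∈ Set.Ioc (0 : ℝ) 1)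
    (hμ : 0 < μ) (hν : 0 ≤ ν) (hs : 0 ≤ s) (hsstar : 0 ≤ sstar) :
    (DVmatrix γ δ β α μ ν s sstar).charpoly =
      (X - C (γ + δ)) * (X - C (γ + δ + ν + μ * sstar)) * (X - C δ) ^ 2 *
        (X - C (δ + ν + μ * sstar)) * (X - C (δ + ν + μ * (sstar - s))) := by
  have h := DVmatrix_charmatrix γ δ β α μ ν s sstar
  rw [Matrix.charpoly, h, Matrix.det_submatrix_equiv_self, Matrix.det_fromBlocks_zero₁₂,
    Matrix.det_fin_two_of, det_fin_four]
  simp only [Matrix.cons_val_zero, Matrix.cons_val_one, Matrix.cons_val_two,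
    Matrix.cons_val_three, Matrix.head_cons, Matrix.tail_cons, Matrix.head_fin_const,
    Matrix.of_apply, map_add, map_sub, map_mul, map_neg, map_pow, map_one]
  ring
end

section
/- Let b, δ, β, γ > 0, α ∈ (0,1], σ_β ≥ 0, and define ℛ₀^σ = (β·(b/δ) + (σ_β²/2)·(b/δ)²)/(γ+δ). Then for all S, I, S*, I* ≥ 0 with S + S* ≤ b/δ and I + I* ≤ b/δ, the following inequality holds: 2(I+I*)·[ β((1−α)S + S*)((1−α)I + I*) − (γ+δ)(I+I*) ] + σ_β²·((1−α)²SI + S*I*)² ≤ 2(γ+δ)(ℛ₀^σ − 1)·(I+I*)². In particular, if ℛ₀^σ < 1 then the left-hand side is at most −2(γ+δ)(1−ℛ₀^σ)(I+I*)² ≤ 0. -/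
set_option maxHeartbeats 1000000 in
/-- the drift inequality for the Itô process `V = (I + I*)²` in the
worst-case stochastic SIR model with noncompliance (`ξ = 1`, `ν = 0`), with
stochastic threshold `ℛ₀^σ = (β(b/δ) + (σ_β²/2)(b/δ)²)/(γ+δ)`. -/
theorem drift_inequality_worst_case
    (b δ β γ α σβ : ℝ)
    (hb : 0 < b) (hδ : 0 < δ) (hβ : 0 < β) (hγ : 0 < γ)
    (hα : α ∈ Set.Ioc (0 : ℝ) 1) (hσβ : 0 ≤ σβ)
    (R0σ : ℝ)
    (hR0σ : R0σ = (β * (b / δ) + σβ ^ 2 / 2 * (b / δ) ^ 2) / (γ + δ)) :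
    ∀ S I Ss Is : ℝ, 0 ≤ S → 0 ≤ I → 0 ≤ Ss → 0 ≤ Is →
      S + Ss ≤ b / δ → I + Is ≤ b / δ →
      (2 * (I + Is) * (β * ((1 - α) * S + Ss) * ((1 - α) * I + Is)
            - (γ + δ) * (I + Is))
          + σβ ^ 2 * ((1 - α) ^ 2 * S * I + Ss * Is) ^ 2
        ≤ 2 * (γ + δ) * (R0σ - 1) * (I + Is) ^ 2) ∧
      (R0σ < 1 →
        2 * (I + Is) * (β * ((1 - α) * S + Ss) * ((1 - α) * I + Is)
              - (γ + δ) * (I + Is))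
            + σβ ^ 2 * ((1 - α) ^ 2 * S * I + Ss * Is) ^ 2
          ≤ -(2 * (γ + δ) * (1 - R0σ) * (I + Is) ^ 2) ∧
        -(2 * (γ + δ) * (1 - R0σ) * (I + Is) ^ 2) ≤ 0) := by
  obtain ⟨hα0, hα1⟩ := hα
  intro S I Ss Is hS hI hSs hIs hSsum hIsum
  have hK : 0 < b / δ := div_pos hb hδ
  have hγδ : 0 < γ + δ := by linarith
  have h1α : 0 ≤ 1 - α := by linarith
  have hX0 : 0 ≤ (1 - α) * S + Ss := by positivity
  have hY0 : 0 ≤ (1 - α) * I + Is := by positivity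
  have hT0 : 0 ≤ I + Is := by linarith
  have hX : (1 - α) * S + Ss ≤ b / δ := by nlinarith
  have hY : (1 - α) * I + Is ≤ I + Is := by nlinarith
  have hC0 : 0 ≤ (1 - α) ^ 2 * S * I + Ss * Is := by positivity
  have hC : (1 - α) ^ 2 * S * I + Ss * Is ≤ ((1 - α) * S + Ss) * ((1 - α) * I + Is) := by
    nlinarith [mul_nonneg (mul_nonneg h1α hS) hIs, mul_nonneg (mul_nonneg h1α hI) hSs]
  have hCK : (1 - α) ^ 2 * S * I + Ss * Is ≤ (b / δ) * (I + Is) := by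
    calc (1 - α) ^ 2 * S * I + Ss * Is ≤ ((1 - α) * S + Ss) * ((1 - α) * I + Is) := hC
      _ ≤ (b / δ) * (I + Is) := by nlinarith
  have hR : 2 * (γ + δ) * R0σ = 2 * β * (b / δ) + σβ ^ 2 * (b / δ) ^ 2 := by
    rw [hR0σ]; field_simp
  have hmain : 2 * (I + Is) * (β * ((1 - α) * S + Ss) * ((1 - α) * I + Is)
        - (γ + δ) * (I + Is))
      + σβ ^ 2 * ((1 - α) ^ 2 * S * I + Ss * Is) ^ 2
      ≤ 2 * (γ + δ) * (R0σ - 1) * (I + Is) ^ 2 := by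
    have hsq := mul_le_mul_of_nonneg_left (pow_le_pow_left₀ hC0 hCK 2) (sq_nonneg σβ)
    have hdrift : 2 * (I + Is) * (β * ((1 - α) * S + Ss) * ((1 - α) * I + Is))
        ≤ 2 * (I + Is) * (β * (b / δ) * (I + Is)) := by
      have hXY : ((1 - α) * S + Ss) * ((1 - α) * I + Is) ≤ (b / δ) * (I + Is) :=
        mul_le_mul hX hY hY0 hK.le
      have h1 := mul_le_mul_of_nonneg_left hXY hβ.le
      have h2 := mul_le_mul_of_nonneg_left h1 (by linarith : (0:ℝ) ≤ 2 * (I + Is))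
      linarith [h2]
    have key : 2 * (γ + δ) * (R0σ - 1) * (I + Is) ^ 2
        = 2 * (I + Is) * (β * (b / δ) * (I + Is)) - 2 * (γ + δ) * (I + Is) ^ 2
          + σβ ^ 2 * ((b / δ) * (I + Is)) ^ 2 := by
      linear_combination ((I + Is) ^ 2) * hR
    linarith [hsq, hdrift, key]
  refine ⟨hmain, fun hlt => ⟨by linarith [hmain, show 2 * (γ + δ) * (R0σ - 1) * (I + Is) ^ 2 = -(2 * (γ + δ) * (1 - R0σ) * (I + Is) ^ 2) from by ring], ?_⟩⟩
  have : 0 ≤ 2 * (γ + δ) * (1 - R0σ) * (I + Is) ^ 2 := mul_nonneg (by nlinarith) (sq_nonneg _)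
  linarith
end
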